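/- arXiv:0904.0538 — 4 statements merged into one kernel-verified Lean document; each statement's English description precedes it below -/
import Mathlib

section
/- Let 0 < α ≤ β ≤ 1 and let {X_{k,l}, k,l ≥ 0} be i.i.d. real random variables with X a generic copy. Suppose n P(|X| > n) → 0 as n → ∞, and suppose in addition that μ_{m,n} / (A_m^α A_n^β) → 0 as m, n → ∞, where μ_{m,n} = Σ_{k=0}^m Σ_{l=0}^n A_{m-k}^{α-1} A_{n-l}^{β-1} E(X 1{|X| ≤ A_m^α A_n^β}). Then (1/(A_m^α A_n^β)) Σ_{k=0}^m Σ_{l=0}^n A_{m-k}^{α-1} A_{n-l}^{β-1} X_{k,l} → 0 in probability as m, n → ∞ (i.e., as min(m,n) → ∞). -/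
open MeasureTheory ProbabilityTheory Filter Finset Topology

/-- `cesaroA α n` is the Cesàro coefficient `A_n^α = (α+1)(α+2)⋯(α+n)/n!`
(with `A_0^α = 1`). Note that this also gives `A_n^{-1} = 0` for `n ≥ 1`. -/
noncomputable def cesaroA (α : ℝ) (n : ℕ) : ℝ :=
  ∏ j ∈ Finset.range n, (α + (j + 1)) / (j + 1)

set_option linter.unusedSectionVars false

lemma cesaroA_zero (α : ℝ) : cesaroA α 0 = 1 := by simp [cesaroA]

lemma cesaroA_succ (α : ℝ) (n : ℕ) :
    cesaroA α (n + 1) = cesaroA α n * ((α + (n + 1)) / (n + 1)) := by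
  simp only [cesaroA, Finset.prod_range_succ]

lemma cesaroA_pos {α : ℝ} (hα : -1 < α) (n : ℕ) : 0 < cesaroA α n := by
  apply Finset.prod_pos
  intro j _
  have h1 : (0:ℝ) ≤ (j:ℝ) := Nat.cast_nonneg j
  apply div_pos (by linarith) (by linarith)

lemma cesaroA_le_one {α : ℝ} (hα : -1 < α) (hα1 : α ≤ 0) (n : ℕ) : cesaroA α n ≤ 1 := by
  apply Finset.prod_le_one
  · intro j _
    have h1 : (0:ℝ) ≤ (j:ℝ) := Nat.cast_nonneg j
    apply le_of_lt (div_pos (by linarith) (by linarith))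
  · intro j _
    have h1 : (0:ℝ) ≤ (j:ℝ) := Nat.cast_nonneg j
    rw [div_le_one (by linarith)]
    linarith

lemma one_le_cesaroA {α : ℝ} (hα : 0 ≤ α) (n : ℕ) : 1 ≤ cesaroA α n := by
  rw [show cesaroA α n = ∏ j ∈ Finset.range n, (α + (j + 1)) / (j + 1) from rfl]
  calc (1:ℝ) = ∏ _j ∈ Finset.range n, (1:ℝ) := by simp
    _ ≤ ∏ j ∈ Finset.range n, (α + (j + 1)) / (j + 1) := by
        apply Finset.prod_le_prod (fun j _ => by norm_num)
        intro j _
        have h1 : (0:ℝ) ≤ (j:ℝ) := Nat.cast_nonneg j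
        rw [le_div_iff₀ (by linarith)]
        linarith

lemma cesaroA_mono {α : ℝ} (hα : 0 ≤ α) : Monotone (cesaroA α) := by
  apply monotone_nat_of_le_succ
  intro n
  rw [cesaroA_succ]
  nth_rewrite 1 [← mul_one (cesaroA α n)]
  apply mul_le_mul_of_nonneg_left _ (cesaroA_pos (by linarith) n).le
  have h1 : (0:ℝ) ≤ (n:ℝ) := Nat.cast_nonneg n
  rw [le_div_iff₀ (by linarith)]
  linarith

lemma cesaroA_succ_le {α : ℝ} (hα : -1 < α) (hα1 : α ≤ 1) (n : ℕ) :
    cesaroA α (n + 1) ≤ 2 * cesaroA α n := by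
  rw [cesaroA_succ, mul_comm (2:ℝ)]
  apply mul_le_mul_of_nonneg_left _ (cesaroA_pos hα n).le
  have h1 : (0:ℝ) ≤ (n:ℝ) := Nat.cast_nonneg n
  rw [div_le_iff₀ (by linarith)]
  linarith

lemma cesaroA_sub_one_mul (α : ℝ) (m : ℕ) :
    cesaroA (α - 1) (m + 1) * (m + 1) = α * cesaroA α m := by
  induction m with
  | zero => simp [cesaroA_succ, cesaroA_zero]
  | succ m ih =>
    rw [cesaroA_succ (α - 1) (m + 1), cesaroA_succ α m]
    push_cast
    have h2 : ((m:ℝ) + 1) ≠ 0 := by positivity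
    have h3 : ((m:ℝ) + 1 + 1) ≠ 0 := by positivity
    field_simp
    linear_combination (α + (m:ℝ) + 1) * ih

lemma sum_cesaroA (α : ℝ) (m : ℕ) :
    ∑ i ∈ Finset.range (m + 1), cesaroA (α - 1) i = cesaroA α m := by
  induction m with
  | zero => simp [cesaroA]
  | succ m ih =>
    rw [Finset.sum_range_succ, ih, cesaroA_succ α m]
    have h := cesaroA_sub_one_mul α m
    have h2 : ((m:ℝ) + 1) ≠ 0 := by positivity
    push_cast at h ⊢
    field_simp
    linear_combination h

lemma one_add_sum_le_prod_one_add (n : ℕ) (x : ℕ → ℝ) (hx : ∀ j, 0 ≤ x j) :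
    1 + ∑ j ∈ Finset.range n, x j ≤ ∏ j ∈ Finset.range n, (1 + x j) := by
  induction n with
  | zero => simp
  | succ n ih =>
    rw [Finset.sum_range_succ, Finset.prod_range_succ]
    have hs : 0 ≤ ∑ j ∈ Finset.range n, x j := Finset.sum_nonneg fun j _ => hx j
    nlinarith [hx n, ih]

lemma tendsto_cesaroA_atTop {α : ℝ} (hα : 0 < α) : Tendsto (cesaroA α) atTop atTop := by
  have key : ∀ n, 1 + α * ∑ j ∈ Finset.range n, (1:ℝ)/(j+1) ≤ cesaroA α n := by
    intro n
    have h := one_add_sum_le_prod_one_add n (fun j => α / (j + 1))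
      (fun j => by positivity)
    rw [Finset.mul_sum]
    calc 1 + ∑ j ∈ Finset.range n, α * ((1:ℝ)/(j+1))
        = 1 + ∑ j ∈ Finset.range n, α/((j:ℝ)+1) := by
          congr 1; apply Finset.sum_congr rfl; intros; ring
      _ ≤ ∏ j ∈ Finset.range n, (1 + α/((j:ℝ)+1)) := h
      _ = cesaroA α n := by
          apply Finset.prod_congr rfl
          intro j _
          have hj : ((j:ℝ)+1) ≠ 0 := by positivity
          rw [eq_div_iff hj, add_mul, one_mul, div_mul_cancel₀ _ hj]
          ring
  apply tendsto_atTop_mono key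
  apply tendsto_atTop_add_const_left
  exact (tendsto_const_mul_atTop_of_pos hα).mpr
    Real.tendsto_sum_range_one_div_nat_succ_atTop

section AuxRV

variable {Ω : Type*} [MeasureSpace Ω] [IsProbabilityMeasure (ℙ : Measure Ω)]
  {X0 : Ω → ℝ}

section Analytic

lemma meas_trunc (hmeas0 : Measurable X0) (t : ℝ) :
    Measurable (fun ω => if |X0 ω| ≤ t then X0 ω else 0) :=
  Measurable.ite (measurableSet_le hmeas0.abs measurable_const) hmeas0 measurable_const

lemma meas_trunc_sq (hmeas0 : Measurable X0) (t : ℝ) :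
    Measurable (fun ω => if |X0 ω| ≤ t then (X0 ω)^2 else 0) :=
  Measurable.ite (measurableSet_le hmeas0.abs measurable_const) (hmeas0.pow_const 2)
    measurable_const

lemma integrable_trunc (hmeas0 : Measurable X0) (t : ℝ) :
    Integrable (fun ω => if |X0 ω| ≤ t then X0 ω else 0) ℙ := by
  apply Integrable.mono' (integrable_const (max t 0))
    (meas_trunc hmeas0 t).aestronglyMeasurable
  apply ae_of_all
  intro ω
  by_cases h : |X0 ω| ≤ t
  · simp only [h, if_true, Real.norm_eq_abs]
    exact le_max_of_le_left h
  · simp [h, le_max_right]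

lemma integrable_trunc_sq (hmeas0 : Measurable X0) (t : ℝ) :
    Integrable (fun ω => if |X0 ω| ≤ t then (X0 ω)^2 else 0) ℙ := by
  apply Integrable.mono' (integrable_const ((max t 0)^2))
    (meas_trunc_sq hmeas0 t).aestronglyMeasurable
  apply ae_of_all
  intro ω
  by_cases h : |X0 ω| ≤ t
  · simp only [h, if_true, Real.norm_eq_abs, abs_pow, ← sq_abs (X0 ω)]
    rw [abs_abs]
    apply pow_le_pow_left₀ (abs_nonneg _) (le_max_of_le_left h)
  · simp only [h, if_false, norm_zero]
    positivity

lemma psi_mono (hmeas0 : Measurable X0) {s t : ℝ} (hst : s ≤ t) :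
    ∫ ω, (if |X0 ω| ≤ s then (X0 ω)^2 else 0) ∂ℙ
      ≤ ∫ ω, (if |X0 ω| ≤ t then (X0 ω)^2 else 0) ∂ℙ := by
  apply integral_mono (integrable_trunc_sq hmeas0 s) (integrable_trunc_sq hmeas0 t)
  intro ω
  by_cases h : |X0 ω| ≤ s
  · simp [h, le_trans h hst]
  · by_cases h2 : |X0 ω| ≤ t <;> simp [h, h2] <;> positivity

lemma psi_le_sq (hmeas0 : Measurable X0) {t : ℝ} (ht : 0 ≤ t) :
    ∫ ω, (if |X0 ω| ≤ t then (X0 ω)^2 else 0) ∂ℙ ≤ t^2 := by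
  have : ∫ ω, (fun _ : Ω => t^2) ω ∂ℙ = t^2 := by simp
  rw [← this]
  apply integral_mono (integrable_trunc_sq hmeas0 t) (integrable_const _)
  intro ω
  by_cases h : |X0 ω| ≤ t
  · simp only [h, if_true]
    rw [← sq_abs]
    apply pow_le_pow_left₀ (abs_nonneg _) h
  · simp only [h, if_false]
    positivity

lemma c_diff (hmeas0 : Measurable X0) {s t : ℝ} (hs : 0 ≤ s) (hst : s ≤ t) :
    |(∫ ω, (if |X0 ω| ≤ t then X0 ω else 0) ∂ℙ)
      - ∫ ω, (if |X0 ω| ≤ s then X0 ω else 0) ∂ℙ|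
      ≤ t * (ℙ {ω | s < |X0 ω|}).toReal := by
  have ht : 0 ≤ t := le_trans hs hst
  have hint : Integrable (fun ω =>
      (if |X0 ω| ≤ t then X0 ω else 0) - (if |X0 ω| ≤ s then X0 ω else 0)) ℙ :=
    (integrable_trunc hmeas0 t).sub (integrable_trunc hmeas0 s)
  rw [← integral_sub (integrable_trunc hmeas0 t) (integrable_trunc hmeas0 s)]
  calc |∫ ω, ((if |X0 ω| ≤ t then X0 ω else 0) - if |X0 ω| ≤ s then X0 ω else 0) ∂ℙ|
      ≤ ∫ ω, |(if |X0 ω| ≤ t then X0 ω else 0) - if |X0 ω| ≤ s then X0 ω else 0| ∂ℙ := by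
        simpa only [Real.norm_eq_abs] using norm_integral_le_integral_norm
          (fun ω => (if |X0 ω| ≤ t then X0 ω else 0) - if |X0 ω| ≤ s then X0 ω else 0)
    _ ≤ ∫ ω, Set.indicator {ω | s < |X0 ω|} (fun _ => t) ω ∂ℙ := by
        apply integral_mono hint.abs
          ((integrable_const t).indicator
            (measurableSet_lt measurable_const hmeas0.abs))
        intro ω
        by_cases h1 : |X0 ω| ≤ s
        · have h2 : |X0 ω| ≤ t := le_trans h1 hst
          have hmem : ω ∉ {ω | s < |X0 ω|} := by simp [not_lt.mpr h1]
          simp [h1, h2, Set.indicator_of_notMem hmem]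
        · have hmem : ω ∈ {ω | s < |X0 ω|} := by simp [not_le.mp h1]
          rw [Set.indicator_of_mem hmem]
          by_cases h2 : |X0 ω| ≤ t
          · simp only [Pi.sub_apply, h2, if_true, h1, if_false, sub_zero] <;>
              simpa using h2
          · simp only [Pi.sub_apply, h2, if_false, h1, sub_zero, abs_zero] <;>
              simpa using ht
    _ = t * (ℙ {ω | s < |X0 ω|}).toReal := by
        rw [integral_indicator_const _ (measurableSet_lt measurable_const hmeas0.abs)]
        rw [smul_eq_mul, mul_comm]
        rfl

lemma psi_diff (hmeas0 : Measurable X0) {s t : ℝ} (hst : s ≤ t) :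
    (∫ ω, (if |X0 ω| ≤ t then (X0 ω)^2 else 0) ∂ℙ)
      - (∫ ω, (if |X0 ω| ≤ s then (X0 ω)^2 else 0) ∂ℙ)
      ≤ t^2 * (ℙ {ω | s < |X0 ω|}).toReal := by
  rw [← integral_sub (integrable_trunc_sq hmeas0 t) (integrable_trunc_sq hmeas0 s)]
  calc ∫ ω, ((if |X0 ω| ≤ t then (X0 ω)^2 else 0) - if |X0 ω| ≤ s then (X0 ω)^2 else 0) ∂ℙ
      ≤ ∫ ω, Set.indicator {ω | s < |X0 ω|} (fun _ => t^2) ω ∂ℙ := by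
        apply integral_mono
          ((integrable_trunc_sq hmeas0 t).sub (integrable_trunc_sq hmeas0 s))
          ((integrable_const (t^2)).indicator
            (measurableSet_lt measurable_const hmeas0.abs))
        intro ω
        by_cases h1 : |X0 ω| ≤ s
        · have h2 : |X0 ω| ≤ t := le_trans h1 hst
          have hmem : ω ∉ {ω | s < |X0 ω|} := by simp [not_lt.mpr h1]
          simp [h1, h2, Set.indicator_of_notMem hmem]
        · have hmem : ω ∈ {ω | s < |X0 ω|} := by simp [not_le.mp h1]
          rw [Set.indicator_of_mem hmem]
          by_cases h2 : |X0 ω| ≤ t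
          · simp only [Pi.sub_apply, h2, if_true, h1, if_false, sub_zero]
            rw [← sq_abs (X0 ω), ← sq_abs t]
            exact pow_le_pow_left₀ (abs_nonneg _) (h2.trans (le_abs_self t)) 2
          · simp only [Pi.sub_apply, h2, if_false, h1, sub_zero]
            positivity
    _ = t^2 * (ℙ {ω | s < |X0 ω|}).toReal := by
        rw [integral_indicator_const _ (measurableSet_lt measurable_const hmeas0.abs)]
        rw [smul_eq_mul, mul_comm]
        rfl

end Analytic

section More
variable {Ω : Type*} [MeasureSpace Ω] [IsProbabilityMeasure (ℙ : Measure Ω)]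
  {X0 : Ω → ℝ}

lemma psi_dyadic (hmeas0 : Measurable X0) {δ M : ℝ} (hδ : 0 ≤ δ) (hM : 1 ≤ M)
    (htail : ∀ s : ℝ, M ≤ s → s * (ℙ {ω | s < |X0 ω|}).toReal ≤ δ) :
    ∀ t : ℝ, 0 ≤ t →
      ∫ ω, (if |X0 ω| ≤ t then (X0 ω)^2 else 0) ∂ℙ ≤ M^2 + 8*δ*t := by
  have hM0 : (0:ℝ) < M := lt_of_lt_of_le one_pos hM
  have claim : ∀ J : ℕ, ∫ ω, (if |X0 ω| ≤ 2^J*M then (X0 ω)^2 else 0) ∂ℙ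
      ≤ M^2 + 4*δ*(2^J*M) := by
    intro J
    induction J with
    | zero =>
      simp only [pow_zero, one_mul]
      have := psi_le_sq hmeas0 hM0.le
      nlinarith
    | succ J ih =>
      have hpow : (1:ℝ) ≤ 2^J := one_le_pow₀ (by norm_num)
      have h1 : (2:ℝ)^J*M ≤ 2^(J+1)*M := by
        rw [pow_succ]
        nlinarith
      have hd := psi_diff hmeas0 (s := 2^J*M) (t := 2^(J+1)*M) h1 (X0 := X0)
      have htl := htail (2^J*M) (le_mul_of_one_le_left hM0.le hpow)
      have htail_nonneg : (0:ℝ) ≤ (ℙ {ω | 2^J*M < |X0 ω|}).toReal := ENNReal.toReal_nonneg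
      have hsq : ((2:ℝ)^(J+1)*M)^2 = (4*(2^J*M))*(2^J*M) := by rw [pow_succ]; ring
      have hkey : ((2:ℝ)^(J+1)*M)^2 * (ℙ {ω | 2^J*M < |X0 ω|}).toReal ≤ 4*(2^J*M)*δ := by
        rw [hsq, mul_assoc]
        apply mul_le_mul_of_nonneg_left htl (by positivity)
      have hgoal : M^2 + 4*δ*(2^(J+1)*M) = M^2 + 4*δ*(2^J*M) + 4*(2^J*M)*δ := by
        rw [pow_succ]; ring
      rw [hgoal]
      linarith
  intro t ht
  by_cases htM : t ≤ M
  · have h1 := psi_mono hmeas0 htM (X0 := X0)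
    have h2 := psi_le_sq hmeas0 hM0.le (X0 := X0)
    nlinarith
  · push_neg at htM
    have hex : ∃ m : ℕ, t ≤ 2 ^ (m+1) * M := by
      obtain ⟨J, hJ⟩ := pow_unbounded_of_one_lt (t/M) (by norm_num : (1:ℝ) < 2)
      refine ⟨J, ?_⟩
      rw [div_lt_iff₀ hM0] at hJ
      have : (2:ℝ)^J ≤ 2^(J+1) := by
        rw [pow_succ]
        nlinarith [one_le_pow₀ (by norm_num : (1:ℝ) ≤ 2) (n := J)]
      nlinarith
    have hJ := Nat.find_spec hex
    rcases hfind : Nat.find hex with _ | m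
    · rw [hfind] at hJ
      have h1 := le_trans (psi_mono hmeas0 hJ (X0 := X0)) (claim 1)
      have : (2:ℝ)^(0+1) = 2 := by norm_num
      rw [this] at hJ
      have : (2:ℝ)^1 = 2 := by norm_num
      rw [this] at h1
      nlinarith
    · rw [hfind] at hJ
      have hmin : ¬ (t ≤ 2^(m+1)*M) := Nat.find_min hex (hfind ▸ Nat.lt_succ_self m)
      push_neg at hmin
      have h1 := le_trans (psi_mono hmeas0 hJ (X0 := X0)) (claim (m+1+1))
      have hp : (2:ℝ)^(m+1+1) = 2^(m+1)*2 := pow_succ 2 (m+1)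
      rw [hp] at h1
      nlinarith [mul_le_mul_of_nonneg_left hmin.le hδ]

lemma tail_real (hmeas0 : Measurable X0)
    (hweak : Tendsto (fun n : ℕ => (n : ℝ) * (ℙ {ω | (n : ℝ) < |X0 ω|}).toReal)
      atTop (𝓝 0)) :
    ∀ η : ℝ, 0 < η → ∃ t0 : ℝ, 1 ≤ t0 ∧
      ∀ s, t0 ≤ s → s * (ℙ {ω | s < |X0 ω|}).toReal ≤ η := by
  intro η hη
  have h2 : ∀ᶠ n : ℕ in atTop, (n:ℝ) * (ℙ {ω | (n : ℝ) < |X0 ω|}).toReal < η/2 :=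
    Filter.Tendsto.eventually_lt_const (by positivity) hweak
  obtain ⟨N, hN⟩ := eventually_atTop.mp h2
  refine ⟨max ((N:ℝ)+1) 1, le_max_right _ _, ?_⟩
  intro s hs
  have hs1 : (1:ℝ) ≤ s := le_trans (le_max_right _ _) hs
  have hsN : ((N:ℝ)+1) ≤ s := le_trans (le_max_left _ _) hs
  set n := ⌊s⌋₊ with hn
  have hns : (n:ℝ) ≤ s := Nat.floor_le (by linarith)
  have hsn : s < (n:ℝ)+1 := Nat.lt_floor_add_one s
  have hnN : N ≤ n := by
    have : (N+1 : ℕ) ≤ n := Nat.le_floor (by push_cast; linarith)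
    omega
  have hn1 : 1 ≤ n := Nat.le_floor (by push_cast; linarith)
  have htmono : (ℙ {ω | s < |X0 ω|}).toReal ≤ (ℙ {ω | (n:ℝ) < |X0 ω|}).toReal := by
    apply ENNReal.toReal_mono (measure_ne_top _ _)
    apply measure_mono
    intro ω hω
    exact lt_of_le_of_lt hns hω
  have h3 := hN n hnN
  have htnn : (0:ℝ) ≤ (ℙ {ω | (n:ℝ) < |X0 ω|}).toReal := ENNReal.toReal_nonneg
  have hsnn : (0:ℝ) ≤ (ℙ {ω | s < |X0 ω|}).toReal := ENNReal.toReal_nonneg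
  have hn1' : (1:ℝ) ≤ (n:ℝ) := by exact_mod_cast hn1
  calc s * (ℙ {ω | s < |X0 ω|}).toReal
      ≤ s * (ℙ {ω | (n:ℝ) < |X0 ω|}).toReal := by
        apply mul_le_mul_of_nonneg_left htmono (by linarith)
    _ ≤ ((n:ℝ)+1) * (ℙ {ω | (n:ℝ) < |X0 ω|}).toReal := by
        apply mul_le_mul_of_nonneg_right (by linarith) htnn
    _ ≤ 2*((n:ℝ) * (ℙ {ω | (n:ℝ) < |X0 ω|}).toReal) := by nlinarith
    _ ≤ η := by nlinarith

lemma c_tendsto_zero (hmeas0 : Measurable X0)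
    (htail : ∀ η : ℝ, 0 < η → ∃ t0 : ℝ, 1 ≤ t0 ∧
      ∀ s, t0 ≤ s → s * (ℙ {ω | s < |X0 ω|}).toReal ≤ η)
    (b : ℕ → ℝ) (hb1 : ∀ n, 1 ≤ b n) (hbmono : Monotone b)
    (hb4 : ∀ n, b (n+1) ≤ 4*b n) (hbtop : Tendsto b atTop atTop)
    (hcb : Tendsto (fun n => ∫ ω, (if |X0 ω| ≤ b n then X0 ω else 0) ∂ℙ)
      atTop (𝓝 0)) :
    Tendsto (fun t : ℝ => ∫ ω, (if |X0 ω| ≤ t then X0 ω else 0) ∂ℙ)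
      atTop (𝓝 0) := by
  rw [NormedAddCommGroup.tendsto_nhds_zero]
  intro η hη
  obtain ⟨t0, ht01, ht0⟩ := htail (η/8) (by positivity)
  have h2 : ∀ᶠ n : ℕ in atTop,
      ‖∫ ω, (if |X0 ω| ≤ b n then X0 ω else 0) ∂ℙ‖ < η/2 := by
    have h0 : Tendsto (fun n : ℕ => ‖∫ ω, (if |X0 ω| ≤ b n then X0 ω else 0) ∂ℙ‖)
        atTop (𝓝 0) := by simpa using hcb.norm
    exact Filter.Tendsto.eventually_lt_const (by positivity) h0
  obtain ⟨N, hN⟩ := eventually_atTop.mp h2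
  obtain ⟨n0, hn0⟩ := eventually_atTop.mp (hbtop.eventually_ge_atTop t0)
  set K := max N n0 with hK
  filter_upwards [eventually_ge_atTop (b (K+1))] with t htK
  have ht1 : (1:ℝ) ≤ t := le_trans (hb1 (K+1)) htK
  have hex : ∃ n, t < b (n+1) := by
    obtain ⟨n, hn⟩ := (hbtop.eventually_gt_atTop t).exists
    exact ⟨n, lt_of_lt_of_le hn (hbmono (Nat.le_succ n))⟩
  set n := Nat.find hex with hndef
  have hfind : t < b (n+1) := Nat.find_spec hex
  have hbn_le : b n ≤ t := by
    rcases Nat.eq_zero_or_pos n with h0 | hpos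
    · rw [h0]
      exact le_trans (hbmono (Nat.zero_le (K+1))) htK
    · have hmin := Nat.find_min hex (show n - 1 < n by omega)
      have hh : n - 1 + 1 = n := by omega
      rw [hh] at hmin
      exact not_lt.mp hmin
  have hnK : K < n := by
    by_contra hcon
    push_neg at hcon
    have : b (n+1) ≤ b (K+1) := hbmono (by omega)
    linarith
  have hnN : N ≤ n := le_trans (le_max_left _ _) hnK.le
  have hnn0 : n0 ≤ n := le_trans (le_max_right _ _) hnK.le
  have hbnt0 : t0 ≤ b n := hn0 n hnn0
  have hbn_pos : (0:ℝ) ≤ b n := le_trans (by linarith) (hb1 n)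
  have hdiff := c_diff hmeas0 hbn_pos hbn_le (X0 := X0)
  have htail_bn := ht0 (b n) hbnt0
  have ht4 : t ≤ 4 * b n := le_trans hfind.le (hb4 n)
  have hcbn := hN n hnN
  have htnn : (0:ℝ) ≤ (ℙ {ω | b n < |X0 ω|}).toReal := ENNReal.toReal_nonneg
  rw [Real.norm_eq_abs] at hcbn ⊢
  have h5 : t * (ℙ {ω | b n < |X0 ω|}).toReal
      ≤ 4 * (b n * (ℙ {ω | b n < |X0 ω|}).toReal) := by
    nlinarith
  have habs : |∫ ω, (if |X0 ω| ≤ t then X0 ω else 0) ∂ℙ|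
      ≤ |(∫ ω, (if |X0 ω| ≤ t then X0 ω else 0) ∂ℙ)
          - ∫ ω, (if |X0 ω| ≤ b n then X0 ω else 0) ∂ℙ|
        + |∫ ω, (if |X0 ω| ≤ b n then X0 ω else 0) ∂ℙ| := by
    have := abs_add_le ((∫ ω, (if |X0 ω| ≤ t then X0 ω else 0) ∂ℙ)
          - ∫ ω, (if |X0 ω| ≤ b n then X0 ω else 0) ∂ℙ)
      (∫ ω, (if |X0 ω| ≤ b n then X0 ω else 0) ∂ℙ)
    simpa using this
  linarith

end More

end AuxRV

lemma sum_reflect_cesaroA (γ : ℝ) (m : ℕ) :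
    ∑ k ∈ Finset.range (m + 1), cesaroA γ (m - k)
      = ∑ i ∈ Finset.range (m + 1), cesaroA γ i := by
  simpa using Finset.sum_range_reflect (fun i => cesaroA γ i) (m + 1)

lemma sum_w' (α β : ℝ) (m n : ℕ) :
    ∑ k ∈ Finset.range (m+1), ∑ l ∈ Finset.range (n+1),
      cesaroA (α-1) (m - k) * cesaroA (β-1) (n - l)
        = cesaroA α m * cesaroA β n := by
  rw [← Finset.sum_mul_sum, sum_reflect_cesaroA, sum_reflect_cesaroA,
    sum_cesaroA, sum_cesaroA]

set_option maxHeartbeats 1000000 in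
theorem cesaro_field_wlln_of_truncated_mean_small
    {Ω : Type*} [MeasureSpace Ω] [IsProbabilityMeasure (ℙ : Measure Ω)]
    (α β : ℝ) (hα0 : 0 < α) (hαβ : α ≤ β) (hβ1 : β ≤ 1)
    (X : ℕ × ℕ → Ω → ℝ) (X0 : Ω → ℝ)
    (hmeas : ∀ kl, Measurable (X kl)) (hmeas0 : Measurable X0)
    (hindep : iIndepFun X ℙ)
    (hident : ∀ kl, IdentDistrib (X kl) X0 ℙ ℙ)
    (hweak : Tendsto (fun n : ℕ => (n : ℝ) * (ℙ {ω | (n : ℝ) < |X0 ω|}).toReal)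
      atTop (𝓝 0))
    (hmu : Tendsto (fun mn : ℕ × ℕ =>
        (∑ k ∈ Finset.range (mn.1 + 1), ∑ l ∈ Finset.range (mn.2 + 1),
          cesaroA (α - 1) (mn.1 - k) * cesaroA (β - 1) (mn.2 - l) *
            ∫ ω, (if |X0 ω| ≤ cesaroA α mn.1 * cesaroA β mn.2 then X0 ω else 0) ∂ℙ)
          / (cesaroA α mn.1 * cesaroA β mn.2))
      atTop (𝓝 0)) :
    TendstoInMeasure ℙ
      (fun mn : ℕ × ℕ => fun ω =>
        (cesaroA α mn.1 * cesaroA β mn.2)⁻¹ *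
          ∑ k ∈ Finset.range (mn.1 + 1), ∑ l ∈ Finset.range (mn.2 + 1),
            cesaroA (α - 1) (mn.1 - k) * cesaroA (β - 1) (mn.2 - l) * X (k, l) ω)
      atTop (fun _ => (0 : ℝ)) := by
  have hβ0 : 0 < β := lt_of_lt_of_le hα0 hαβ
  have hα1 : α ≤ 1 := le_trans hαβ hβ1
  have hαm1 : (-1:ℝ) < α - 1 := by linarith
  have hβm1 : (-1:ℝ) < β - 1 := by linarith
  -- abbreviations
  set a : ℕ × ℕ → ℝ := fun p => cesaroA α p.1 * cesaroA β p.2 with ha_def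
  have ha_pos : ∀ p, 0 < a p := fun p =>
    mul_pos (cesaroA_pos (by linarith) _) (cesaroA_pos (by linarith) _)
  have ha_one : ∀ p, 1 ≤ a p := fun p =>
    one_le_mul_of_one_le_of_one_le (one_le_cesaroA hα0.le _) (one_le_cesaroA hβ0.le _)
  set w : ℕ × ℕ → ℕ × ℕ → ℝ :=
    fun p kl => cesaroA (α-1) (p.1 - kl.1) * cesaroA (β-1) (p.2 - kl.2) with hw_def
  have hw_pos : ∀ p kl, 0 < w p kl := fun p kl =>
    mul_pos (cesaroA_pos hαm1 _) (cesaroA_pos hβm1 _)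
  have hw_le1 : ∀ p kl, w p kl ≤ 1 := by
    intro p kl
    have h1 := cesaroA_le_one hαm1 (by linarith) (p.1 - kl.1)
    have h2 := cesaroA_le_one hβm1 (by linarith) (p.2 - kl.2)
    have h3 := (cesaroA_pos hαm1 (p.1 - kl.1)).le
    have h4 := (cesaroA_pos hβm1 (p.2 - kl.2)).le
    calc w p kl ≤ 1 * 1 := mul_le_mul h1 h2 h4 (by norm_num)
      _ = 1 := by norm_num
  have hsumw : ∀ p : ℕ × ℕ,
      ∑ kl ∈ Finset.range (p.1+1) ×ˢ Finset.range (p.2+1), w p kl = a p := by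
    intro p
    rw [Finset.sum_product]
    exact sum_w' α β p.1 p.2
  -- the truncated mean tends to zero along the grid
  have hc_pair : Tendsto (fun p : ℕ × ℕ =>
      ∫ ω, (if |X0 ω| ≤ a p then X0 ω else 0) ∂ℙ) atTop (𝓝 0) := by
    apply hmu.congr
    intro p
    simp only [← Finset.sum_mul]
    rw [sum_w' α β p.1 p.2]
    exact mul_div_cancel_left₀ _ (ha_pos p).ne'
  have hdiag : Tendsto (fun n : ℕ => ((n, n) : ℕ × ℕ)) atTop atTop := by
    rw [← Filter.prod_atTop_atTop_eq]
    exact tendsto_id.prodMk tendsto_id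
  have hcgrid : Tendsto (fun n : ℕ =>
      ∫ ω, (if |X0 ω| ≤ cesaroA α n * cesaroA β n then X0 ω else 0) ∂ℙ)
      atTop (𝓝 0) := by
    have h := hc_pair.comp hdiag
    apply h.congr
    intro n
    simp only [Function.comp_apply, ha_def]
  have hctend : Tendsto (fun t : ℝ =>
      ∫ ω, (if |X0 ω| ≤ t then X0 ω else 0) ∂ℙ) atTop (𝓝 0) := by
    apply c_tendsto_zero hmeas0 (tail_real hmeas0 hweak)
      (fun n => cesaroA α n * cesaroA β n)
    · exact fun n => one_le_mul_of_one_le_of_one_le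
        (one_le_cesaroA hα0.le _) (one_le_cesaroA hβ0.le _)
    · intro i j hij
      exact mul_le_mul (cesaroA_mono hα0.le hij) (cesaroA_mono hβ0.le hij)
        (le_trans zero_le_one (one_le_cesaroA hβ0.le _))
        (le_trans zero_le_one (one_le_cesaroA hα0.le _))
    · intro n
      calc cesaroA α (n+1) * cesaroA β (n+1)
          ≤ (2 * cesaroA α n) * (2 * cesaroA β n) :=
            mul_le_mul (cesaroA_succ_le (by linarith) hα1 n)
              (cesaroA_succ_le (by linarith) hβ1 n)
              (le_trans zero_le_one (one_le_cesaroA hβ0.le _))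
              (mul_nonneg (by norm_num)
                (le_trans zero_le_one (one_le_cesaroA hα0.le n)))
        _ = 4 * (cesaroA α n * cesaroA β n) := by ring
    · apply tendsto_atTop_mono
        (fun n => le_mul_of_one_le_right (le_trans zero_le_one (one_le_cesaroA hα0.le n))
          (one_le_cesaroA hβ0.le n))
      exact tendsto_cesaroA_atTop hα0
    · exact hcgrid
  have htendsto_a : Tendsto a atTop atTop := by
    have h1 : Tendsto (fun p : ℕ × ℕ => p.1) atTop atTop := by
      rw [← Filter.prod_atTop_atTop_eq]
      exact tendsto_fst
    have h2 := (tendsto_cesaroA_atTop hα0).comp h1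
    apply tendsto_atTop_mono _ h2
    intro q
    simp only [Function.comp_apply, ha_def]
    exact le_mul_of_one_le_right
      (le_trans zero_le_one (one_le_cesaroA hα0.le q.1)) (one_le_cesaroA hβ0.le q.2)
  -- start of the convergence in measure proof
  rw [tendstoInMeasure_iff_dist]
  intro ε hε
  rw [ENNReal.tendsto_nhds_zero]
  intro ηe hηe
  -- reduce to a real-valued bound
  suffices key : ∀ η : ℝ, 0 < η → ∀ᶠ p : ℕ × ℕ in atTop,
      ℙ {x | ε ≤ dist ((cesaroA α p.1 * cesaroA β p.2)⁻¹ *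
        ∑ k ∈ Finset.range (p.1 + 1), ∑ l ∈ Finset.range (p.2 + 1),
          cesaroA (α - 1) (p.1 - k) * cesaroA (β - 1) (p.2 - l) * X (k, l) x) 0}
        ≤ ENNReal.ofReal η by
    rcases eq_or_ne ηe ⊤ with rfl | htop
    · exact Filter.Eventually.of_forall fun _ => le_top
    · have hpos : 0 < ηe.toReal := ENNReal.toReal_pos hηe.ne' htop
      have := key ηe.toReal hpos
      apply this.mono
      intro p hp
      rwa [ENNReal.ofReal_toReal htop] at hp
  intro η hη
  set δ : ℝ := min (ε^2*η/128) (η/2) with hδ_def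
  have hδpos : 0 < δ := lt_min (by positivity) (by positivity)
  obtain ⟨M, hM1, hMtail⟩ := tail_real hmeas0 hweak δ hδpos
  have hM0 : (0:ℝ) < M := lt_of_lt_of_le one_pos hM1
  have habs : Tendsto (fun t : ℝ =>
      |∫ ω, (if |X0 ω| ≤ t then X0 ω else 0) ∂ℙ|) atTop (𝓝 0) := by
    simpa using hctend.abs
  obtain ⟨t2, ht2⟩ := eventually_atTop.mp
    (Filter.Tendsto.eventually_le_const (show (0:ℝ) < ε/2 by positivity) habs)
  set A0 : ℝ := max (max M t2) (16*M^2/(ε^2*η)) with hA0_def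
  filter_upwards [htendsto_a.eventually_ge_atTop A0] with p hap
  have haM : M ≤ a p := le_trans (le_trans (le_max_left _ _) (le_max_left _ _)) hap
  have hat2 : t2 ≤ a p := le_trans (le_trans (le_max_right _ _) (le_max_left _ _)) hap
  have ha16 : 16*M^2/(ε^2*η) ≤ a p := le_trans (le_max_right _ _) hap
  have haP : 0 < a p := ha_pos p
  -- notation for this p
  set P : Finset (ℕ × ℕ) := Finset.range (p.1+1) ×ˢ Finset.range (p.2+1) with hP_def
  set T : ℕ × ℕ → ℝ := fun kl => a p / w p kl with hT_def
  have hT_a : ∀ kl, a p ≤ T kl := by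
    intro kl
    rw [hT_def, le_div_iff₀ (hw_pos p kl)]
    nth_rewrite 2 [← mul_one (a p)]
    exact mul_le_mul_of_nonneg_left (hw_le1 p kl) haP.le
  have hT_M : ∀ kl, M ≤ T kl := fun kl => le_trans haM (hT_a kl)
  have hT_pos : ∀ kl, 0 < T kl := fun kl => lt_of_lt_of_le haP (hT_a kl)
  have hwT : ∀ kl, w p kl * T kl = a p := by
    intro kl
    rw [hT_def, mul_comm]
    exact div_mul_cancel₀ _ (hw_pos p kl).ne'
  set Z : ℕ × ℕ → Ω → ℝ :=
    fun kl ω => w p kl * (if |X kl ω| ≤ T kl then X kl ω else 0) with hZ_def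
  -- measurability of the truncation maps
  have hgmeas : ∀ kl : ℕ × ℕ, Measurable
      (fun x : ℝ => w p kl * (if |x| ≤ T kl then x else 0)) := by
    intro kl
    apply Measurable.const_mul
    exact Measurable.ite (measurableSet_le (continuous_abs.measurable) measurable_const)
      measurable_id measurable_const
  have hZmeas : ∀ kl, Measurable (Z kl) := fun kl => (hgmeas kl).comp (hmeas kl)
  have hZident : ∀ kl, IdentDistrib (Z kl)
      (fun ω => w p kl * (if |X0 ω| ≤ T kl then X0 ω else 0)) ℙ ℙ :=
    fun kl => (hident kl).comp (hgmeas kl)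
  have hZint : ∀ kl, Integrable (Z kl) ℙ :=
    fun kl => (integrable_trunc (hmeas kl) (T kl)).const_mul _
  have hZbdd : ∀ kl, ∀ ω, ‖Z kl ω‖ ≤ a p := by
    intro kl ω
    rw [hZ_def]
    by_cases h : |X kl ω| ≤ T kl
    · simp only [h, if_true, Real.norm_eq_abs, abs_mul, abs_of_pos (hw_pos p kl)]
      rw [← hwT kl]
      exact mul_le_mul_of_nonneg_left h (hw_pos p kl).le
    · simp only [h, if_false, mul_zero, norm_zero]
      linarith [ha_one p]
  have hZmem : ∀ kl, MemLp (Z kl) 2 ℙ := fun kl =>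
    MemLp.of_bound (hZmeas kl).aestronglyMeasurable (a p)
      (ae_of_all _ (hZbdd kl))
  -- the truncated weighted sum
  set SY : Ω → ℝ := ∑ kl ∈ P, Z kl with hSY_def
  have hSYmem : MemLp SY 2 ℙ := memLp_finset_sum' P fun kl _ => hZmem kl
  -- expectation of SY
  have hEZ : ∀ kl, ∫ ω, Z kl ω ∂ℙ
      = w p kl * ∫ ω, (if |X0 ω| ≤ T kl then X0 ω else 0) ∂ℙ := by
    intro kl
    rw [(hZident kl).integral_eq]
    exact integral_const_mul _ _
  have hESY : ∫ ω, SY ω ∂ℙ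
      = ∑ kl ∈ P, w p kl * ∫ ω, (if |X0 ω| ≤ T kl then X0 ω else 0) ∂ℙ := by
    rw [hSY_def]
    have : ∫ ω, (∑ kl ∈ P, Z kl) ω ∂ℙ = ∫ ω, ∑ kl ∈ P, Z kl ω ∂ℙ := by
      congr 1
      ext ω
      simp [Finset.sum_apply]
    rw [this, integral_finset_sum P fun kl _ => hZint kl]
    exact Finset.sum_congr rfl fun kl _ => hEZ kl
  have hmean : |∫ ω, SY ω ∂ℙ| ≤ ε/2 * a p := by
    rw [hESY]
    calc |∑ kl ∈ P, w p kl * ∫ ω, (if |X0 ω| ≤ T kl then X0 ω else 0) ∂ℙ|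
        ≤ ∑ kl ∈ P, |w p kl * ∫ ω, (if |X0 ω| ≤ T kl then X0 ω else 0) ∂ℙ| :=
          Finset.abs_sum_le_sum_abs _ _
      _ ≤ ∑ kl ∈ P, w p kl * (ε/2) := by
          apply Finset.sum_le_sum
          intro kl _
          rw [abs_mul, abs_of_pos (hw_pos p kl)]
          apply mul_le_mul_of_nonneg_left _ (hw_pos p kl).le
          exact ht2 (T kl) (le_trans hat2 (hT_a kl))
      _ = ε/2 * a p := by rw [← Finset.sum_mul, hsumw p]; ring
  -- variance of SY
  have hZindep_fam : iIndepFun Z ℙ :=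
    hindep.comp (fun kl x => w p kl * (if |x| ≤ T kl then x else 0)) hgmeas
  have hvar_sum : variance SY ℙ = ∑ kl ∈ P, variance (Z kl) ℙ :=
    IndepFun.variance_sum (fun kl _ => hZmem kl)
      (fun i _ j _ hij => hZindep_fam.indepFun hij)
  have hvar_each : ∀ kl, variance (Z kl) ℙ
      ≤ (w p kl)^2 * (M^2 + 8*δ*T kl) := by
    intro kl
    have h1 : variance (Z kl) ℙ
        = (w p kl)^2 * variance (fun ω => if |X kl ω| ≤ T kl then X kl ω else 0) ℙ :=
      variance_const_mul _ _ _
    rw [h1]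
    apply mul_le_mul_of_nonneg_left _ (sq_nonneg _)
    have h2 := variance_le_expectation_sq
      (μ := ℙ) (X := fun ω => if |X kl ω| ≤ T kl then X kl ω else 0)
      (meas_trunc (hmeas kl) (T kl)).aestronglyMeasurable
    apply h2.trans
    have h3 : (fun ω => ((fun ω => if |X kl ω| ≤ T kl then X kl ω else 0) ^ 2) ω)
        = fun ω => if |X kl ω| ≤ T kl then (X kl ω)^2 else 0 := by
      ext ω
      by_cases h : |X kl ω| ≤ T kl <;> simp [h]
    have h4 : (ℙ)[(fun ω => if |X kl ω| ≤ T kl then X kl ω else 0) ^ 2]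
        = ∫ ω, (if |X kl ω| ≤ T kl then (X kl ω)^2 else 0) ∂ℙ := by
      rw [← h3]
    rw [h4]
    have h5 : IdentDistrib (fun ω => if |X kl ω| ≤ T kl then (X kl ω)^2 else 0)
        (fun ω => if |X0 ω| ≤ T kl then (X0 ω)^2 else 0) ℙ ℙ := by
      apply (hident kl).comp (u := fun x : ℝ => if |x| ≤ T kl then x^2 else 0)
      exact Measurable.ite (measurableSet_le (continuous_abs.measurable) measurable_const)
        (measurable_id.pow_const 2) measurable_const
    rw [h5.integral_eq]
    exact psi_dyadic hmeas0 hδpos.le hM1 hMtail (T kl) (hT_pos kl).le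
  have hvar_total : variance SY ℙ ≤ M^2 * a p + 8*δ*(a p)^2 := by
    rw [hvar_sum]
    calc ∑ kl ∈ P, variance (Z kl) ℙ
        ≤ ∑ kl ∈ P, (w p kl * M^2 + 8*δ*(w p kl * (a p))) := by
          apply Finset.sum_le_sum
          intro kl hkl
          refine (hvar_each kl).trans ?_
          have hw1 := hw_le1 p kl
          have hw0 := (hw_pos p kl).le
          have h6 : (w p kl)^2 * T kl = w p kl * a p := by
            rw [sq, mul_assoc, hwT kl]
          have h7 : (w p kl)^2 ≤ w p kl := by nlinarith
          nlinarith [hδpos.le, sq_nonneg (w p kl), hM0.le]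
      _ = M^2 * a p + 8*δ*(a p)^2 := by
          rw [Finset.sum_add_distrib, ← Finset.sum_mul, ← Finset.mul_sum,
            ← Finset.sum_mul, hsumw p]
          ring
  -- Chebyshev
  have hcheb := meas_ge_le_variance_div_sq (μ := ℙ) hSYmem
    (show 0 < ε * a p / 2 by positivity)
  -- the union bound event
  set U : Set Ω := ⋃ kl ∈ P, {ω | T kl < |X kl ω|} with hU_def
  set B : Set Ω := {ω | ε * a p / 2 ≤ |SY ω - ℙ[SY]|} with hB_def
  -- inclusion
  have hsub : {x | ε ≤ dist ((cesaroA α p.1 * cesaroA β p.2)⁻¹ *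
      ∑ k ∈ Finset.range (p.1 + 1), ∑ l ∈ Finset.range (p.2 + 1),
        cesaroA (α - 1) (p.1 - k) * cesaroA (β - 1) (p.2 - l) * X (k, l) x) 0}
      ⊆ U ∪ B := by
    intro x hx
    rw [Set.mem_union]
    by_contra hcon
    push_neg at hcon
    obtain ⟨hU', hB'⟩ := hcon
    simp only [hU_def, Set.mem_iUnion, not_exists, Set.mem_setOf_eq] at hU'
    have htrunc : ∀ kl ∈ P, |X kl x| ≤ T kl := by
      intro kl hkl
      by_contra hcc
      push_neg at hcc
      exact hU' kl hkl hcc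
    have hsum_eq : ∑ k ∈ Finset.range (p.1 + 1), ∑ l ∈ Finset.range (p.2 + 1),
        cesaroA (α - 1) (p.1 - k) * cesaroA (β - 1) (p.2 - l) * X (k, l) x = SY x := by
      rw [hSY_def]
      rw [show (∑ kl ∈ P, Z kl) x = ∑ kl ∈ P, Z kl x from Finset.sum_apply _ _ _]
      rw [hP_def, Finset.sum_product]
      apply Finset.sum_congr rfl
      intro k hk
      apply Finset.sum_congr rfl
      intro l hl
      have hmem : ((k, l) : ℕ × ℕ) ∈ P := by
        rw [hP_def, Finset.mem_product]
        exact ⟨hk, hl⟩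
      rw [hZ_def]
      simp only [htrunc (k, l) hmem, if_true]
      rfl
    rw [Set.mem_setOf_eq, hsum_eq, Real.dist_0_eq_abs] at hx
    have hBlt : |SY x - ℙ[SY]| < ε * a p / 2 := by
      rw [hB_def, Set.mem_setOf_eq] at hB'
      linarith [not_le.mp hB']
    have hSYbig : ε * a p ≤ |SY x| := by
      rw [abs_mul, abs_inv, abs_of_pos haP] at hx
      calc ε * a p = (ε) * a p := rfl
        _ ≤ ((a p)⁻¹ * |SY x|) * a p := by
            apply mul_le_mul_of_nonneg_right hx haP.le
        _ = |SY x| := by field_simp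
    have : |SY x| < ε * a p := by
      calc |SY x| = |(SY x - ℙ[SY]) + ℙ[SY]| := by ring_nf
        _ ≤ |SY x - ℙ[SY]| + |ℙ[SY]| := abs_add_le _ _
        _ < ε * a p / 2 + ε/2 * a p := by
            apply add_lt_add_of_lt_of_le hBlt hmean
        _ = ε * a p := by ring
    linarith
  -- probability bounds
  have hPU : ℙ U ≤ ENNReal.ofReal (η/2) := by
    rw [hU_def]
    refine le_trans (measure_biUnion_finset_le P _) ?_
    have hterm : ∀ kl ∈ P, ℙ {ω | T kl < |X kl ω|}
        ≤ ENNReal.ofReal (δ / a p * w p kl) := by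
      intro kl _
      have hide : ℙ {ω | T kl < |X kl ω|} = ℙ {ω | T kl < |X0 ω|} := by
        have := (hident kl).measure_mem_eq
          (s := {y : ℝ | T kl < |y|})
          (measurableSet_lt measurable_const continuous_abs.measurable)
        exact this
      rw [hide, ← ENNReal.ofReal_toReal (measure_ne_top ℙ _)]
      apply ENNReal.ofReal_le_ofReal
      have htt := hMtail (T kl) (hT_M kl)
      have h8 : (ℙ {ω | T kl < |X0 ω|}).toReal ≤ δ / T kl := by
        rw [le_div_iff₀ (hT_pos kl)]
        linarith [htt]
      apply h8.trans
      rw [hT_def]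
      rw [div_div_eq_mul_div, div_mul_eq_mul_div]
    refine le_trans (Finset.sum_le_sum hterm) ?_
    rw [← ENNReal.ofReal_sum_of_nonneg
      (fun kl _ => mul_nonneg (div_nonneg hδpos.le haP.le) (hw_pos p kl).le)]
    apply ENNReal.ofReal_le_ofReal
    rw [← Finset.mul_sum, hsumw p]
    rw [div_mul_cancel₀ _ haP.ne']
    exact min_le_right _ _
  have hPB : ℙ B ≤ ENNReal.ofReal (η/2) := by
    refine le_trans hcheb ?_
    apply ENNReal.ofReal_le_ofReal
    have hq : (0:ℝ) < ε * a p / 2 := div_pos (mul_pos hε haP) two_pos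
    rw [div_le_iff₀ (pow_pos hq 2)]
    have h16 : 16*M^2 ≤ ε^2*η * a p := by
      rw [div_le_iff₀ (by positivity)] at ha16
      linarith
    have hδ1 : δ ≤ ε^2*η/128 := min_le_left _ _
    have hvt := hvar_total
    nlinarith [haP, sq_nonneg (a p), sq_nonneg ε, hη.le, mul_pos haP haP]
  calc ℙ {x | ε ≤ dist ((cesaroA α p.1 * cesaroA β p.2)⁻¹ *
      ∑ k ∈ Finset.range (p.1 + 1), ∑ l ∈ Finset.range (p.2 + 1),
        cesaroA (α - 1) (p.1 - k) * cesaroA (β - 1) (p.2 - l) * X (k, l) x) 0}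
      ≤ ℙ (U ∪ B) := measure_mono hsub
    _ ≤ ℙ U + ℙ B := measure_union_le _ _
    _ ≤ ENNReal.ofReal (η/2) + ENNReal.ofReal (η/2) := add_le_add hPU hPB
    _ = ENNReal.ofReal η := by
        rw [← ENNReal.ofReal_add (by positivity) (by positivity)]
        norm_num
end

section
/- Let 0 < α ≤ β ≤ 1 and let X be a real random variable with n P(|X| > n) → 0 as n → ∞. Then Σ_{k=1}^m Σ_{l=1}^n P(k^{α-1} l^{β-1} |X| > m^α n^β) → 0 as m, n → ∞ (i.e., as min(m,n) → ∞). -/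
open MeasureTheory ProbabilityTheory Filter Finset Topology

-- Bernoulli-type step inequality
lemma aux_step (a : ℝ) (ha0 : 0 < a) (ha1 : a ≤ 1) (m : ℕ) :
    ((m:ℝ)+1) ^ (a-1) ≤ (((m:ℝ)+1) ^ a - (m:ℝ) ^ a) / a := by
  rw [le_div_iff₀ ha0]
  have hm1 : (0:ℝ) < (m:ℝ)+1 := by positivity
  have hs : (-1:ℝ) ≤ -(1/((m:ℝ)+1)) := by
    rw [neg_le_neg_iff]
    exact div_le_one_of_le₀ (by linarith) hm1.le
  have hb := rpow_one_add_le_one_add_mul_self hs ha0.le ha1 (p := a)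
  have h1 : (1 + -(1/((m:ℝ)+1))) = (m:ℝ)/((m:ℝ)+1) := by field_simp; ring
  rw [h1] at hb
  have h2 : ((m:ℝ)/((m:ℝ)+1)) ^ a = (m:ℝ)^a / ((m:ℝ)+1)^a :=
    Real.div_rpow (Nat.cast_nonneg m) hm1.le a
  rw [h2] at hb
  have hpow : (0:ℝ) < ((m:ℝ)+1)^a := Real.rpow_pos_of_pos hm1 a
  have hb' : (m:ℝ)^a ≤ (1 + a * -(1/((m:ℝ)+1))) * ((m:ℝ)+1)^a := by
    rw [← div_le_iff₀ hpow] at *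
    linarith [hb]
  have h3 : ((m:ℝ)+1) ^ (a-1) = ((m:ℝ)+1)^a / ((m:ℝ)+1) := Real.rpow_sub_one hm1.ne' a
  have h4 : (1 + a * -(1/((m:ℝ)+1))) * ((m:ℝ)+1)^a
      = ((m:ℝ)+1)^a - a * (((m:ℝ)+1)^a / ((m:ℝ)+1)) := by ring
  rw [h4] at hb'
  rw [h3]
  linarith

lemma aux_sum (a : ℝ) (ha0 : 0 < a) (ha1 : a ≤ 1) (m : ℕ) :
    ∑ k ∈ Finset.Icc 1 m, (k:ℝ) ^ (a-1) ≤ (m:ℝ) ^ a / a := by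
  induction m with
  | zero => simp [Real.zero_rpow ha0.ne']
  | succ m ih =>
    rw [Finset.sum_Icc_succ_top (Nat.one_le_iff_ne_zero.mpr (Nat.succ_ne_zero m))]
    have := aux_step a ha0 ha1 m
    push_cast
    have h : ((m:ℝ)+1)^a / a = (m:ℝ)^a/a + (((m:ℝ)+1)^a - (m:ℝ)^a)/a := by ring
    rw [h]
    push_cast at ih
    linarith

lemma aux_tail {Ω : Type*} [MeasureSpace Ω] [IsProbabilityMeasure (ℙ : Measure Ω)]
    (X : Ω → ℝ)
    (hweak : Tendsto (fun n : ℕ => (n : ℝ) * (ℙ {ω | (n : ℝ) < |X ω|}).toReal)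
      atTop (𝓝 0)) {ε : ℝ} (hε : 0 < ε) :
    ∃ N : ℕ, 1 ≤ N ∧ ∀ t : ℝ, (N : ℝ) ≤ t →
      t * (ℙ {ω | t < |X ω|}).toReal ≤ ε := by
  have hP : ∀ s t : ℝ, s ≤ t →
      (ℙ {ω | t < |X ω|}).toReal ≤ (ℙ {ω | s < |X ω|}).toReal := by
    intro s t hst
    apply ENNReal.toReal_mono (measure_ne_top _ _)
    exact measure_mono (fun ω hω => lt_of_le_of_lt hst hω)
  have h := Metric.tendsto_atTop.mp hweak (ε/2) (by linarith)
  obtain ⟨N₀, hN₀⟩ := h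
  refine ⟨max N₀ 1, le_max_right _ _, ?_⟩
  intro t ht
  set n : ℕ := ⌊t⌋₊ with hn
  have ht1 : (1:ℝ) ≤ t := le_trans (by exact_mod_cast le_max_right N₀ 1) ht
  have hnt : (n:ℝ) ≤ t := Nat.floor_le (by linarith)
  have hn1 : 1 ≤ n := (Nat.one_le_floor_iff t).mpr ht1
  have htn : t < (n:ℝ) + 1 := Nat.lt_floor_add_one t
  have hN₀n : N₀ ≤ n := by
    have h1 : (N₀:ℝ) ≤ t := le_trans (by exact_mod_cast le_max_left N₀ 1) ht
    exact Nat.le_floor h1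
  have hkey := hN₀ n hN₀n
  rw [Real.dist_eq, sub_zero, abs_of_nonneg (by positivity)] at hkey
  have hPn := hP (n:ℝ) t hnt
  have ht2n : t ≤ 2 * n := by
    have : (1:ℝ) ≤ (n:ℝ) := by exact_mod_cast hn1
    linarith
  calc t * (ℙ {ω | t < |X ω|}).toReal
      ≤ (2*(n:ℝ)) * (ℙ {ω | (n:ℝ) < |X ω|}).toReal := by
        apply mul_le_mul ht2n hPn ENNReal.toReal_nonneg (by positivity)
    _ = 2 * ((n:ℝ) * (ℙ {ω | (n:ℝ) < |X ω|}).toReal) := by ring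
    _ ≤ 2 * (ε/2) := by linarith
    _ = ε := by ring

theorem tail_sum_tendsto_zero_of_weak_condition
    {Ω : Type*} [MeasureSpace Ω] [IsProbabilityMeasure (ℙ : Measure Ω)]
    (α β : ℝ) (hα0 : 0 < α) (hαβ : α ≤ β) (hβ1 : β ≤ 1)
    (X : Ω → ℝ) (hmeas : Measurable X)
    (hweak : Tendsto (fun n : ℕ => (n : ℝ) * (ℙ {ω | (n : ℝ) < |X ω|}).toReal)
      atTop (𝓝 0)) :
    Tendsto (fun mn : ℕ × ℕ =>
        ∑ k ∈ Finset.Icc 1 mn.1, ∑ l ∈ Finset.Icc 1 mn.2,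
          (ℙ {ω | (mn.1 : ℝ) ^ α * (mn.2 : ℝ) ^ β <
            (k : ℝ) ^ (α - 1) * (l : ℝ) ^ (β - 1) * |X ω|}).toReal)
      atTop (𝓝 0) := by
  have hβ0 : 0 < β := lt_of_lt_of_le hα0 hαβ
  have hα1 : α ≤ 1 := le_trans hαβ hβ1
  rw [Metric.tendsto_nhds]
  intro ε hε
  set ε' : ℝ := ε * α * β / 2 with hε'def
  have hε' : 0 < ε' := by positivity
  obtain ⟨N, hN1, hN⟩ := aux_tail X hweak hε'
  -- choose M with m^α ≥ N for m ≥ M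
  have hrt : Tendsto (fun m : ℕ => (m:ℝ) ^ α) atTop atTop :=
    (tendsto_rpow_atTop hα0).comp tendsto_natCast_atTop_atTop
  obtain ⟨M, hM⟩ := (hrt.eventually_ge_atTop (N:ℝ)).exists_forall_of_atTop
  rw [eventually_atTop]
  refine ⟨(max M 1, max M 1), ?_⟩
  rintro ⟨m, n⟩ hmn
  obtain ⟨hm, hn⟩ : max M 1 ≤ m ∧ max M 1 ≤ n := hmn
  have hm1 : 1 ≤ m := le_trans (le_max_right M 1) hm
  have hn1 : 1 ≤ n := le_trans (le_max_right M 1) hn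
  have hmα : (N:ℝ) ≤ (m:ℝ) ^ α := hM m (le_trans (le_max_left M 1) hm)
  have hnβ : (1:ℝ) ≤ (n:ℝ) ^ β :=
    Real.one_le_rpow (by exact_mod_cast hn1) hβ0.le
  have hmpos : (0:ℝ) < (m:ℝ) ^ α := Real.rpow_pos_of_pos (by positivity) α
  have hnpos : (0:ℝ) < (n:ℝ) ^ β := Real.rpow_pos_of_pos (by positivity) β
  set D : ℝ := (m:ℝ) ^ α * (n:ℝ) ^ β with hDdef
  have hDpos : 0 < D := by positivity
  have hND : (N:ℝ) ≤ D := by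
    calc (N:ℝ) ≤ (m:ℝ)^α := hmα
      _ = (m:ℝ)^α * 1 := by ring
      _ ≤ D := by rw [hDdef]; gcongr
  have hterm : ∀ k ∈ Finset.Icc 1 m, ∀ l ∈ Finset.Icc 1 n,
      (ℙ {ω | D < (k : ℝ) ^ (α - 1) * (l : ℝ) ^ (β - 1) * |X ω|}).toReal
        ≤ ε' / D * ((k:ℝ)^(α-1) * (l:ℝ)^(β-1)) := by
    intro k hk l hl
    rw [Finset.mem_Icc] at hk hl
    have hkpos : (0:ℝ) < (k:ℝ) := by exact_mod_cast hk.1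
    have hlpos : (0:ℝ) < (l:ℝ) := by exact_mod_cast hl.1
    set c : ℝ := (k:ℝ)^(α-1) * (l:ℝ)^(β-1) with hcdef
    have hcpos : 0 < c := by
      exact mul_pos (Real.rpow_pos_of_pos hkpos _) (Real.rpow_pos_of_pos hlpos _)
    have hc1 : c ≤ 1 := by
      have h1 : (k:ℝ)^(α-1) ≤ 1 :=
        Real.rpow_le_one_of_one_le_of_nonpos (by exact_mod_cast hk.1) (by linarith)
      have h2 : (l:ℝ)^(β-1) ≤ 1 :=
        Real.rpow_le_one_of_one_le_of_nonpos (by exact_mod_cast hl.1) (by linarith)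
      calc c ≤ 1 * 1 := by
              apply mul_le_mul h1 h2 (Real.rpow_pos_of_pos hlpos _).le one_pos.le
        _ = 1 := by ring
    have hset : {ω | D < c * |X ω|} = {ω | D / c < |X ω|} := by
      ext ω
      rw [Set.mem_setOf_eq, Set.mem_setOf_eq, div_lt_iff₀ hcpos, mul_comm]
    have htge : (N:ℝ) ≤ D / c := by
      rw [le_div_iff₀ hcpos]
      calc (N:ℝ) * c ≤ (N:ℝ) * 1 := by
            apply mul_le_mul_of_nonneg_left hc1 (by positivity)
        _ = (N:ℝ) := by ring
        _ ≤ D := hND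
    have htpos : 0 < D / c := by positivity
    have hb := hN (D / c) htge
    rw [hset]
    have : (ℙ {ω | D / c < |X ω|}).toReal ≤ ε' / (D / c) := by
      rw [le_div_iff₀ htpos, mul_comm]
      exact hb
    calc (ℙ {ω | D / c < |X ω|}).toReal ≤ ε' / (D / c) := this
      _ = ε' / D * c := by field_simp
  have hsum : ∑ k ∈ Finset.Icc 1 m, ∑ l ∈ Finset.Icc 1 n,
      (ℙ {ω | D < (k : ℝ) ^ (α - 1) * (l : ℝ) ^ (β - 1) * |X ω|}).toReal
      ≤ ε / 2 := by
    calc ∑ k ∈ Finset.Icc 1 m, ∑ l ∈ Finset.Icc 1 n,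
        (ℙ {ω | D < (k : ℝ) ^ (α - 1) * (l : ℝ) ^ (β - 1) * |X ω|}).toReal
        ≤ ∑ k ∈ Finset.Icc 1 m, ∑ l ∈ Finset.Icc 1 n,
            ε' / D * ((k:ℝ)^(α-1) * (l:ℝ)^(β-1)) := by
          apply Finset.sum_le_sum
          intro k hk
          apply Finset.sum_le_sum
          intro l hl
          exact hterm k hk l hl
      _ = ε' / D * ((∑ k ∈ Finset.Icc 1 m, (k:ℝ)^(α-1)) *
            (∑ l ∈ Finset.Icc 1 n, (l:ℝ)^(β-1))) := by
          rw [Finset.sum_mul_sum, Finset.mul_sum]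
          simp [Finset.mul_sum, mul_assoc]
      _ ≤ ε' / D * (((m:ℝ)^α / α) * ((n:ℝ)^β / β)) := by
          gcongr <;> first
            | exact aux_sum α hα0 hα1 m
            | exact aux_sum β hβ0 hβ1 n
            | positivity
      _ = ε / 2 := by
          rw [hε'def, hDdef]
          field_simp
  have hnonneg : (0:ℝ) ≤ ∑ k ∈ Finset.Icc 1 m, ∑ l ∈ Finset.Icc 1 n,
      (ℙ {ω | D < (k : ℝ) ^ (α - 1) * (l : ℝ) ^ (β - 1) * |X ω|}).toReal :=
    Finset.sum_nonneg fun k _ => Finset.sum_nonneg fun l _ => ENNReal.toReal_nonneg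
  simp only [Real.dist_eq, sub_zero]
  rw [abs_of_nonneg hnonneg]
  linarith
end

section
/- Let 0 < α ≤ β ≤ 1 and let X be a real random variable with n P(|X| > n) → 0 as n → ∞. For 1 ≤ k ≤ m and 1 ≤ l ≤ n set Y_{k,l}^{m,n} = k^{α-1} l^{β-1} X 1{k^{α-1} l^{β-1}|X| ≤ m^α n^β}. Then (1/(m^α n^β))^2 Σ_{k=1}^m Σ_{l=1}^n Var(Y_{k,l}^{m,n}) → 0 as m, n → ∞ (i.e., as min(m,n) → ∞). -/
open MeasureTheory ProbabilityTheory Filter Finset Topology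


private lemma aux_sq_le (x t : ℝ) (hxt : |x| ≤ t) :
    x ^ 2 ≤ ∑ j ∈ Finset.range ⌈t⌉₊, 2 * ((j : ℝ) + 1) * (if (j : ℝ) < |x| then 1 else 0) := by
  have key : ∀ i : ℕ, ∑ j ∈ Finset.range i, (2 * ((j : ℝ) + 1)) = i * (i + 1) := by
    intro i
    induction i with
    | zero => simp
    | succ n ih => rw [Finset.sum_range_succ, ih]; push_cast; ring
  set i := ⌈|x|⌉₊ with hi
  have hiN : i ≤ ⌈t⌉₊ := Nat.ceil_le_ceil hxt
  have h1 : x ^ 2 ≤ ∑ j ∈ Finset.range i, 2 * ((j : ℝ) + 1) * (if (j : ℝ) < |x| then 1 else 0) := by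
    have heq : ∀ j ∈ Finset.range i,
        2 * ((j : ℝ) + 1) * (if (j : ℝ) < |x| then 1 else 0) = 2 * ((j : ℝ) + 1) := by
      intro j hj
      rw [Finset.mem_range] at hj
      rw [if_pos (Nat.lt_ceil.mp hj)]
      ring
    rw [Finset.sum_congr rfl heq, key]
    have hxi : |x| ≤ i := Nat.le_ceil _
    nlinarith [abs_nonneg x, sq_abs x]
  refine h1.trans (Finset.sum_le_sum_of_subset_of_nonneg (Finset.range_subset_range.mpr hiN) ?_)
  intro j _ _
  have : (0:ℝ) ≤ (if (j : ℝ) < |x| then (1:ℝ) else 0) := by split <;> norm_num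
  positivity

private lemma aux_var_le {Ω : Type*} [MeasureSpace Ω] [IsProbabilityMeasure (ℙ : Measure Ω)]
    (X : Ω → ℝ) (hmeas : Measurable X) (c M : ℝ) (hc0 : 0 < c) :
    variance (fun ω => if c * |X ω| ≤ M then c * X ω else 0) ℙ ≤
      c ^ 2 * ∑ j ∈ Finset.range ⌈M / c⌉₊,
        2 * ((j : ℝ) + 1) * (ℙ {ω | (j : ℝ) < |X ω|}).toReal := by
  set Y : Ω → ℝ := fun ω => if c * |X ω| ≤ M then c * X ω else 0 with hY
  have hYmeas : Measurable Y := by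
    apply Measurable.ite _ (hmeas.const_mul c) measurable_const
    exact measurableSet_le (hmeas.abs.const_mul c) measurable_const
  have hsj : ∀ j : ℕ, MeasurableSet {ω : Ω | (j : ℝ) < |X ω|} := fun j =>
    measurableSet_lt measurable_const hmeas.abs
  set g : Ω → ℝ := fun ω => c ^ 2 * ∑ j ∈ Finset.range ⌈M / c⌉₊,
      2 * ((j : ℝ) + 1) * Set.indicator {ω' : Ω | (j : ℝ) < |X ω'|} (fun _ => (1:ℝ)) ω with hg
  have hgint : Integrable g ℙ := by
    apply Integrable.const_mul
    apply integrable_finset_sum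
    intro j _
    exact (((integrable_const (1:ℝ)).indicator (hsj j)).const_mul _)
  have h2 : ∀ ω, (Y ω) ^ 2 ≤ g ω := by
    intro ω
    have hind : ∀ j : ℕ,
        Set.indicator {ω' : Ω | (j : ℝ) < |X ω'|} (fun _ => (1:ℝ)) ω
          = if (j : ℝ) < |X ω| then 1 else 0 := by
      intro j; simp [Set.indicator_apply, Set.mem_setOf_eq]
    have hgnn : 0 ≤ ∑ j ∈ Finset.range ⌈M / c⌉₊,
        2 * ((j : ℝ) + 1) * (if (j : ℝ) < |X ω| then 1 else 0) := by
      apply Finset.sum_nonneg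
      intro j _
      have : (0:ℝ) ≤ (if (j : ℝ) < |X ω| then (1:ℝ) else 0) := by split <;> norm_num
      positivity
    simp only [hg, hY]
    simp only [hind]
    split_ifs with h
    · have hXle : |X ω| ≤ M / c := (le_div_iff₀ hc0).mpr (by linarith [h])
      have := aux_sq_le (X ω) (M / c) hXle
      calc (c * X ω) ^ 2 = c ^ 2 * (X ω) ^ 2 := by ring
        _ ≤ _ := by
          apply mul_le_mul_of_nonneg_left this (sq_nonneg c)
    · simpa using mul_le_mul_of_nonneg_left hgnn (sq_nonneg c)
  have h1 : variance Y ℙ ≤ ∫ ω, (Y ω) ^ 2 ∂ℙ := by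
    have := variance_le_expectation_sq (μ := ℙ) hYmeas.aestronglyMeasurable
    simpa using this
  have h3 : ∫ ω, (Y ω) ^ 2 ∂ℙ ≤ ∫ ω, g ω ∂ℙ :=
    integral_mono_of_nonneg (ae_of_all _ fun ω => sq_nonneg _) hgint (ae_of_all _ h2)
  have h4 : ∫ ω, g ω ∂ℙ = c ^ 2 * ∑ j ∈ Finset.range ⌈M / c⌉₊,
      2 * ((j : ℝ) + 1) * (ℙ {ω : Ω | (j : ℝ) < |X ω|}).toReal := by
    simp only [hg]
    rw [integral_const_mul]
    congr 1
    rw [integral_finset_sum _ (fun j _ => ((integrable_const (1:ℝ)).indicator (hsj j)).const_mul _)]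
    refine Finset.sum_congr rfl fun j _ => ?_
    rw [integral_const_mul, integral_indicator_const (1:ℝ) (hsj j)]
    simp [measureReal_def]
  calc variance Y ℙ ≤ ∫ ω, (Y ω) ^ 2 ∂ℙ := h1
    _ ≤ ∫ ω, g ω ∂ℙ := h3
    _ = _ := h4

private lemma aux_sum_rpow (γ : ℝ) (hγ0 : 0 < γ) (hγ1 : γ ≤ 1) (m : ℕ) :
    ∑ k ∈ Finset.Icc 1 m, (k : ℝ) ^ (γ - 1) ≤ (m : ℝ) ^ γ / γ := by
  have step : ∀ k : ℕ, 1 ≤ k → (k : ℝ) ^ (γ - 1) ≤ ((k : ℝ) ^ γ - ((k : ℝ) - 1) ^ γ) / γ := by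
    intro k hk
    have hk0 : (0:ℝ) < k := by exact_mod_cast hk
    have hk1 : (1:ℝ) ≤ k := by exact_mod_cast hk
    have hs : (-1:ℝ) ≤ -(1 / (k:ℝ)) := by
      rw [neg_le_neg_iff]
      rw [div_le_one hk0]
      exact hk1
    have hber := rpow_one_add_le_one_add_mul_self hs hγ0.le hγ1
    -- (1 - 1/k)^γ ≤ 1 - γ/k
    have h1k : (1:ℝ) + -(1 / (k:ℝ)) = ((k:ℝ) - 1) / k := by field_simp; ring
    rw [h1k] at hber
    have hker : (((k:ℝ) - 1) / k) ^ γ = ((k:ℝ) - 1) ^ γ / (k:ℝ) ^ γ :=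
      Real.div_rpow (by linarith) hk0.le γ
    rw [hker] at hber
    have hkpow : (0:ℝ) < (k:ℝ) ^ γ := Real.rpow_pos_of_pos hk0 γ
    have hmul := mul_le_mul_of_nonneg_right hber hkpow.le
    rw [div_mul_cancel₀ _ hkpow.ne'] at hmul
    -- (k-1)^γ ≤ (1 + γ * -(1/k)) * k^γ
    have hsub : (k:ℝ) ^ (γ - 1) = (k:ℝ) ^ γ / k := by
      rw [Real.rpow_sub hk0, Real.rpow_one]
    rw [le_div_iff₀ hγ0, hsub]
    have hexp : (1 + γ * -(1 / (k:ℝ))) * (k:ℝ) ^ γ = (k:ℝ) ^ γ - γ * ((k:ℝ) ^ γ / k) := by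
      field_simp; ring
    rw [hexp] at hmul
    linarith
  have tele : ∑ k ∈ Finset.Icc 1 m, ((k : ℝ) ^ γ - ((k : ℝ) - 1) ^ γ) = (m : ℝ) ^ γ := by
    rw [← Finset.Ico_add_one_right_eq_Icc, Finset.sum_Ico_eq_sum_range]
    have : ∀ i ∈ Finset.range (m + 1 - 1),
        (((1 + i : ℕ) : ℝ) ^ γ - (((1 + i : ℕ) : ℝ) - 1) ^ γ)
          = ((fun j : ℕ => ((j : ℝ)) ^ γ) (i + 1) - (fun j : ℕ => ((j : ℝ)) ^ γ) i) := by
      intro i _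
      push_cast
      ring_nf
    rw [Finset.sum_congr rfl this, Finset.sum_range_sub (fun j : ℕ => ((j : ℝ)) ^ γ)]
    simp [Real.zero_rpow hγ0.ne']
  calc ∑ k ∈ Finset.Icc 1 m, (k : ℝ) ^ (γ - 1)
      ≤ ∑ k ∈ Finset.Icc 1 m, ((k : ℝ) ^ γ - ((k : ℝ) - 1) ^ γ) / γ :=
        Finset.sum_le_sum fun k hk => step k (Finset.mem_Icc.mp hk).1
    _ = (∑ k ∈ Finset.Icc 1 m, ((k : ℝ) ^ γ - ((k : ℝ) - 1) ^ γ)) / γ := by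
        rw [Finset.sum_div]
    _ = (m : ℝ) ^ γ / γ := by rw [tele]


set_option maxHeartbeats 2000000 in
theorem truncated_variance_sum_tendsto_zero
    {Ω : Type*} [MeasureSpace Ω] [IsProbabilityMeasure (ℙ : Measure Ω)]
    (α β : ℝ) (hα0 : 0 < α) (hαβ : α ≤ β) (hβ1 : β ≤ 1)
    (X : Ω → ℝ) (hmeas : Measurable X)
    (hweak : Tendsto (fun n : ℕ => (n : ℝ) * (ℙ {ω | (n : ℝ) < |X ω|}).toReal)
      atTop (𝓝 0)) :
    Tendsto (fun mn : ℕ × ℕ =>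
        (((mn.1 : ℝ) ^ α * (mn.2 : ℝ) ^ β)⁻¹) ^ 2 *
          ∑ k ∈ Finset.Icc 1 mn.1, ∑ l ∈ Finset.Icc 1 mn.2,
            variance (fun ω =>
              if (k : ℝ) ^ (α - 1) * (l : ℝ) ^ (β - 1) * |X ω| ≤
                  (mn.1 : ℝ) ^ α * (mn.2 : ℝ) ^ β then
                (k : ℝ) ^ (α - 1) * (l : ℝ) ^ (β - 1) * X ω
              else 0) ℙ)
      atTop (𝓝 0) := by
  have hβ0 : 0 < β := lt_of_lt_of_le hα0 hαβ
  have hα1 : α ≤ 1 := hαβ.trans hβ1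
  set p : ℕ → ℝ := fun j => (ℙ {ω | (j : ℝ) < |X ω|}).toReal with hp
  have pnn : ∀ j, 0 ≤ p j := fun j => ENNReal.toReal_nonneg
  have ple1 : ∀ j, p j ≤ 1 := fun j => by
    simp only [hp]
    exact ENNReal.toReal_le_of_le_ofReal zero_le_one (by simpa using prob_le_one)
  -- step 1 : partial sums of `2(j+1) p j` are controlled by partial sums of `j * p j`
  have B1 : ∀ N : ℕ, (∑ j ∈ Finset.range N, 2 * ((j : ℝ) + 1) * p j)
      ≤ 2 + 4 * ∑ j ∈ Finset.range N, (j : ℝ) * p j := by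
    intro N
    cases N with
    | zero =>
      simp
    | succ N' =>
      rw [Finset.sum_range_succ' (fun j => 2 * ((j : ℝ) + 1) * p j) N',
        Finset.sum_range_succ' (fun j => (j : ℝ) * p j) N']
      have hterm : ∑ i ∈ Finset.range N', 2 * (((i + 1 : ℕ) : ℝ) + 1) * p (i + 1)
          ≤ ∑ i ∈ Finset.range N', 4 * (((i + 1 : ℕ) : ℝ) * p (i + 1)) := by
        apply Finset.sum_le_sum
        intro i _
        have h1 : (1 : ℝ) ≤ ((i + 1 : ℕ) : ℝ) := by push_cast; linarith [Nat.cast_nonneg (α := ℝ) i]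
        nlinarith [pnn (i + 1)]
      rw [← Finset.mul_sum] at hterm
      have hs : (0:ℝ) ≤ ∑ i ∈ Finset.range N', ((i + 1 : ℕ) : ℝ) * p (i + 1) :=
        Finset.sum_nonneg fun i _ => mul_nonneg (by positivity) (pnn (i + 1))
      have h0 := ple1 0
      push_cast
      push_cast at hterm
      nlinarith [pnn 0]
  rw [NormedAddCommGroup.tendsto_nhds_zero]
  intro ε hε
  set δ : ℝ := ε * α * β / 20 with hδdef
  have hδ : 0 < δ := by positivity
  -- Cesàro
  have hces := hweak.cesaro
  have h1 : ∀ᶠ N : ℕ in atTop,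
      ‖(N : ℝ)⁻¹ * ∑ i ∈ Finset.range N, (i : ℝ) * p i‖ < δ :=
    (NormedAddCommGroup.tendsto_nhds_zero.mp hces) δ hδ
  obtain ⟨U₁, hU₁⟩ := eventually_atTop.mp h1
  set U₂ : ℕ := ⌈2 / δ⌉₊ with hU₂def
  set U : ℕ := max (max 1 U₁) U₂ with hUdef
  have claim : ∀ N : ℕ, U ≤ N →
      (∑ j ∈ Finset.range N, 2 * ((j : ℝ) + 1) * p j) ≤ 5 * (δ * N) := by
    intro N hN
    have hN1 : 1 ≤ N := le_trans (le_trans (le_max_left 1 U₁) (le_max_left _ _)) hN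
    have hNpos : (0:ℝ) < N := by exact_mod_cast hN1
    have hTN : (∑ i ∈ Finset.range N, (i : ℝ) * p i) ≤ δ * N := by
      have habs := hU₁ N (le_trans (le_trans (le_max_right 1 U₁) (le_max_left _ _)) hN)
      rw [Real.norm_eq_abs] at habs
      have h2 := (abs_lt.mp habs).2
      have := mul_lt_mul_of_pos_left h2 hNpos
      rw [← mul_assoc, mul_inv_cancel₀ hNpos.ne', one_mul] at this
      linarith [this]
    have h2N : 2 ≤ δ * N := by
      have hUN : (U₂ : ℝ) ≤ N := by exact_mod_cast le_trans (le_max_right _ _) hN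
      have : 2 / δ ≤ (N : ℝ) := le_trans (Nat.le_ceil _) hUN
      rw [div_le_iff₀ hδ] at this
      linarith
    have := B1 N
    linarith
  -- choice of m₀
  set m₀ : ℕ := max 1 ⌈((U : ℝ)) ^ (1 / α)⌉₊ with hm₀def
  filter_upwards [eventually_ge_atTop (m₀, 1)] with mn hmn
  obtain ⟨m, n⟩ := mn
  obtain ⟨hm, hn⟩ : m₀ ≤ m ∧ 1 ≤ n := ⟨hmn.1, hmn.2⟩
  have hm1 : 1 ≤ m := le_trans (le_max_left _ _) hm
  have hmR : (1:ℝ) ≤ (m:ℝ) := by exact_mod_cast hm1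
  have hnR : (1:ℝ) ≤ (n:ℝ) := by exact_mod_cast hn
  set A : ℝ := (m : ℝ) ^ α with hA
  set B : ℝ := (n : ℝ) ^ β with hB
  have hA1 : 1 ≤ A := by
    calc (1:ℝ) = 1 ^ α := (Real.one_rpow α).symm
    _ ≤ (m:ℝ) ^ α := Real.rpow_le_rpow zero_le_one hmR hα0.le
  have hB1 : 1 ≤ B := by
    calc (1:ℝ) = 1 ^ β := (Real.one_rpow β).symm
    _ ≤ (n:ℝ) ^ β := Real.rpow_le_rpow zero_le_one hnR hβ0.le
  have hA0 : 0 < A := lt_of_lt_of_le one_pos hA1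
  have hB0 : 0 < B := lt_of_lt_of_le one_pos hB1
  set M : ℝ := A * B with hM
  have hM1 : 1 ≤ M := by rw [hM]; nlinarith
  have hM0 : 0 < M := lt_of_lt_of_le one_pos hM1
  have hUA : (U : ℝ) ≤ A := by
    have hmc : ((U : ℝ)) ^ (1 / α) ≤ (m : ℝ) := by
      have h1 : ((⌈((U : ℝ)) ^ (1 / α)⌉₊ : ℕ) : ℝ) ≤ (m : ℝ) := by
        exact_mod_cast le_trans (le_max_right _ _) hm
      exact le_trans (Nat.le_ceil _) h1
    have hkey : (((U : ℝ)) ^ (1 / α)) ^ α = (U : ℝ) := by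
      rw [← Real.rpow_mul (Nat.cast_nonneg U), one_div_mul_cancel hα0.ne', Real.rpow_one]
    calc (U : ℝ) = (((U : ℝ)) ^ (1 / α)) ^ α := hkey.symm
    _ ≤ (m : ℝ) ^ α := Real.rpow_le_rpow (Real.rpow_nonneg (Nat.cast_nonneg U) _) hmc hα0.le
  have hUM : (U : ℝ) ≤ M := hUA.trans (le_mul_of_one_le_right hA0.le hB1)
  -- per-term bound
  have key : ∀ k ∈ Finset.Icc 1 m, ∀ l ∈ Finset.Icc 1 n,
      variance (fun ω =>
        if (k : ℝ) ^ (α - 1) * (l : ℝ) ^ (β - 1) * |X ω| ≤ M then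
          (k : ℝ) ^ (α - 1) * (l : ℝ) ^ (β - 1) * X ω
        else 0) ℙ ≤ 10 * δ * ((k : ℝ) ^ (α - 1) * (l : ℝ) ^ (β - 1)) * M := by
    intro k hk l hl
    have hk1 : 1 ≤ k := (Finset.mem_Icc.mp hk).1
    have hl1 : 1 ≤ l := (Finset.mem_Icc.mp hl).1
    have hkR : (1:ℝ) ≤ (k:ℝ) := by exact_mod_cast hk1
    have hlR : (1:ℝ) ≤ (l:ℝ) := by exact_mod_cast hl1
    set c : ℝ := (k : ℝ) ^ (α - 1) * (l : ℝ) ^ (β - 1) with hc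
    have hc0 : 0 < c := mul_pos (Real.rpow_pos_of_pos (by linarith) _)
      (Real.rpow_pos_of_pos (by linarith) _)
    have hc1 : c ≤ 1 := by
      have ha : (k:ℝ) ^ (α - 1) ≤ 1 :=
        Real.rpow_le_one_of_one_le_of_nonpos hkR (by linarith)
      have hb : (l:ℝ) ^ (β - 1) ≤ 1 :=
        Real.rpow_le_one_of_one_le_of_nonpos hlR (by linarith)
      calc c ≤ 1 * 1 := mul_le_mul ha hb (Real.rpow_nonneg (by linarith) _) zero_le_one
      _ = 1 := one_mul 1
    have hMc : (U : ℝ) ≤ M / c := by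
      have : M ≤ M / c := by
        rw [le_div_iff₀ hc0]
        nlinarith
      linarith
    have hNU : U ≤ ⌈M / c⌉₊ := by
      have := Nat.ceil_le_ceil hMc
      simpa using this
    have hceil : (⌈M / c⌉₊ : ℝ) ≤ M / c + 1 := (Nat.ceil_lt_add_one (by positivity)).le
    have hvar := aux_var_le X hmeas c M hc0
    have hsum := claim _ hNU
    have hstep : c ^ 2 * (5 * (δ * (⌈M / c⌉₊ : ℝ))) ≤ 10 * δ * c * M := by
      have h1 : c ^ 2 * (5 * (δ * (⌈M / c⌉₊ : ℝ))) ≤ c ^ 2 * (5 * (δ * (M / c + 1))) := by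
        apply mul_le_mul_of_nonneg_left _ (sq_nonneg c)
        have := mul_le_mul_of_nonneg_left hceil hδ.le
        linarith
      have h2 : c ^ 2 * (5 * (δ * (M / c + 1))) = 5 * δ * (c * M + c ^ 2) := by
        field_simp
      have hcc : c ^ 2 ≤ c * M := by nlinarith
      have h3 : 5 * δ * (c * M + c ^ 2) ≤ 10 * δ * c * M := by nlinarith
      linarith [h1, h2.le, h2.ge, h3]
    exact hvar.trans (le_trans (mul_le_mul_of_nonneg_left hsum (sq_nonneg c)) hstep)
  -- sum everything
  have hsum2 : (∑ k ∈ Finset.Icc 1 m, ∑ l ∈ Finset.Icc 1 n,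
      variance (fun ω =>
        if (k : ℝ) ^ (α - 1) * (l : ℝ) ^ (β - 1) * |X ω| ≤ M then
          (k : ℝ) ^ (α - 1) * (l : ℝ) ^ (β - 1) * X ω
        else 0) ℙ) ≤ 10 * δ * M * (A / α * (B / β)) := by
    calc (∑ k ∈ Finset.Icc 1 m, ∑ l ∈ Finset.Icc 1 n,
        variance (fun ω =>
          if (k : ℝ) ^ (α - 1) * (l : ℝ) ^ (β - 1) * |X ω| ≤ M then
            (k : ℝ) ^ (α - 1) * (l : ℝ) ^ (β - 1) * X ω
          else 0) ℙ)
        ≤ ∑ k ∈ Finset.Icc 1 m, ∑ l ∈ Finset.Icc 1 n,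
            10 * δ * ((k : ℝ) ^ (α - 1) * (l : ℝ) ^ (β - 1)) * M :=
          Finset.sum_le_sum fun k hk => Finset.sum_le_sum fun l hl => key k hk l hl
      _ = 10 * δ * M * ((∑ k ∈ Finset.Icc 1 m, (k : ℝ) ^ (α - 1)) *
            (∑ l ∈ Finset.Icc 1 n, (l : ℝ) ^ (β - 1))) := by
          rw [Finset.sum_mul_sum, Finset.mul_sum]
          refine Finset.sum_congr rfl fun k _ => ?_
          rw [Finset.mul_sum]
          exact Finset.sum_congr rfl fun l _ => by ring
      _ ≤ 10 * δ * M * (A / α * (B / β)) := by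
          apply mul_le_mul_of_nonneg_left _ (by positivity)
          apply mul_le_mul (aux_sum_rpow α hα0 hα1 m) (aux_sum_rpow β hβ0 hβ1 n)
          · exact Finset.sum_nonneg fun l _ => Real.rpow_nonneg (by positivity) _
          · positivity
  have hnn : (0:ℝ) ≤ (M⁻¹) ^ 2 * ∑ k ∈ Finset.Icc 1 m, ∑ l ∈ Finset.Icc 1 n,
      variance (fun ω =>
        if (k : ℝ) ^ (α - 1) * (l : ℝ) ^ (β - 1) * |X ω| ≤ M then
          (k : ℝ) ^ (α - 1) * (l : ℝ) ^ (β - 1) * X ω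
        else 0) ℙ :=
    mul_nonneg (sq_nonneg _) (Finset.sum_nonneg fun k _ =>
      Finset.sum_nonneg fun l _ => variance_nonneg _ _)
  rw [Real.norm_eq_abs, abs_of_nonneg hnn]
  have hfin : (M⁻¹) ^ 2 * (10 * δ * M * (A / α * (B / β))) = ε / 2 := by
    rw [hM, hδdef]
    field_simp
    ring
  calc (M⁻¹) ^ 2 * ∑ k ∈ Finset.Icc 1 m, ∑ l ∈ Finset.Icc 1 n,
      variance (fun ω =>
        if (k : ℝ) ^ (α - 1) * (l : ℝ) ^ (β - 1) * |X ω| ≤ M then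
          (k : ℝ) ^ (α - 1) * (l : ℝ) ^ (β - 1) * X ω
        else 0) ℙ
      ≤ (M⁻¹) ^ 2 * (10 * δ * M * (A / α * (B / β))) :=
        mul_le_mul_of_nonneg_left hsum2 (sq_nonneg _)
    _ = ε / 2 := hfin
    _ < ε := by linarith
end

section
/- Let 0 < α ≤ β ≤ 1 and let X be a real random variable with E X = 0 and E|X| < ∞. Then (1/(m^α n^β)) Σ_{k=1}^m Σ_{l=1}^n E(k^{α-1} l^{β-1} X 1{k^{α-1} l^{β-1}|X| ≤ m^α n^β}) → 0 as m, n → ∞ (i.e., as min(m,n) → ∞). -/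
open MeasureTheory ProbabilityTheory Filter Finset Topology

private lemma step_rpow {α : ℝ} (hα0 : 0 < α) (hα1 : α ≤ 1) (a : ℝ) (ha : 0 ≤ a) :
    a ^ α + α * (a + 1) ^ (α - 1) ≤ (a + 1) ^ α := by
  have hb : (0:ℝ) < a + 1 := by linarith
  have h1 : a ^ α * (a + 1) ^ (1 - α) ≤ α * a + (1 - α) * (a + 1) :=
    Real.geom_mean_le_arith_mean2_weighted hα0.le (by linarith) ha hb.le (by ring)
  have h3 : (0:ℝ) ≤ (a + 1) ^ (α - 1) := (Real.rpow_pos_of_pos hb _).le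
  have h2 : a ^ α = a ^ α * (a + 1) ^ (1 - α) * (a + 1) ^ (α - 1) := by
    rw [mul_assoc, ← Real.rpow_add hb]
    norm_num
  have h4 : a ^ α ≤ (α * a + (1 - α) * (a + 1)) * (a + 1) ^ (α - 1) := by
    rw [h2]; exact mul_le_mul_of_nonneg_right h1 h3
  have h5 : (α * a + (1 - α) * (a + 1)) = (a + 1) - α := by ring
  have h6 : (a + 1) ^ α = (a + 1) * (a + 1) ^ (α - 1) := by
    nth_rewrite 1 [show α = 1 + (α - 1) by ring]
    rw [Real.rpow_add hb, Real.rpow_one]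
  rw [h5, sub_mul] at h4
  rw [h6]
  linarith

private lemma sum_rpow_le' {α : ℝ} (hα0 : 0 < α) (hα1 : α ≤ 1) (m : ℕ) :
    ∑ k ∈ Finset.Icc 1 m, (k : ℝ) ^ (α - 1) ≤ (m : ℝ) ^ α / α := by
  induction m with
  | zero => simp [Real.zero_rpow hα0.ne']
  | succ m ih =>
    rw [Finset.sum_Icc_succ_top (by omega : 1 ≤ m + 1)]
    have key := step_rpow hα0 hα1 (m : ℝ) (Nat.cast_nonneg m)
    push_cast
    have h2 : ((m : ℝ)) ^ α / α + ((m : ℝ) + 1) ^ (α - 1) ≤ ((m : ℝ) + 1) ^ α / α := by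
      rw [div_add' _ _ _ hα0.ne', div_le_div_iff₀ hα0 hα0]
      nlinarith [key]
    linarith

theorem truncated_mean_sum_tendsto_zero
    {Ω : Type*} [MeasureSpace Ω] [IsProbabilityMeasure (ℙ : Measure Ω)]
    (α β : ℝ) (hα0 : 0 < α) (hαβ : α ≤ β) (hβ1 : β ≤ 1)
    (X : Ω → ℝ) (hmeas : Measurable X)
    (hint : Integrable X ℙ) (hmean : ∫ ω, X ω ∂ℙ = 0) :
    Tendsto (fun mn : ℕ × ℕ =>
        ((mn.1 : ℝ) ^ α * (mn.2 : ℝ) ^ β)⁻¹ *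
          ∑ k ∈ Finset.Icc 1 mn.1, ∑ l ∈ Finset.Icc 1 mn.2,
            ∫ ω, (if (k : ℝ) ^ (α - 1) * (l : ℝ) ^ (β - 1) * |X ω| ≤
                (mn.1 : ℝ) ^ α * (mn.2 : ℝ) ^ β then
              (k : ℝ) ^ (α - 1) * (l : ℝ) ^ (β - 1) * X ω
            else 0) ∂ℙ)
      atTop (𝓝 0) := by
  have hβ0 : 0 < β := lt_of_lt_of_le hα0 hαβ
  have hα1 : α ≤ 1 := hαβ.trans hβ1
  set g : ℝ → ℝ := fun M => ∫ ω in {ω | M < |X ω|}, |X ω| ∂ℙ with hg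
  have hAbs : Integrable (fun ω => |X ω|) ℙ := hint.abs
  have hmeasset : ∀ M : ℝ, MeasurableSet {ω | M < |X ω|} := fun M =>
    measurableSet_lt measurable_const hmeas.abs
  have hgnonneg : ∀ M, 0 ≤ g M := fun M =>
    setIntegral_nonneg (hmeasset M) fun ω _ => abs_nonneg _
  -- the tail measure tends to zero
  have hμtend : Tendsto (fun M : ℝ => ℙ {ω | M < |X ω|}) atTop (𝓝 0) := by
    have hb : ∀ M : ℝ, 0 < M →
        ℙ {ω | M < |X ω|} ≤ ENNReal.ofReal ((∫ ω, |X ω| ∂ℙ) / M) := by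
      intro M hM
      have hmar := mul_meas_ge_le_integral_of_nonneg
        (Filter.Eventually.of_forall fun ω => abs_nonneg (X ω)) hAbs M
      have h1 : ℙ {ω | M < |X ω|} ≤ ℙ {ω | M ≤ |X ω|} :=
        measure_mono (Set.setOf_subset_setOf.mpr fun ω h => le_of_lt h)
      refine h1.trans ?_
      rw [ENNReal.le_ofReal_iff_toReal_le (measure_ne_top _ _)
        (div_nonneg (integral_nonneg fun ω => abs_nonneg _) hM.le), le_div_iff₀ hM, mul_comm]
      exact hmar
    have h2 : Tendsto (fun M : ℝ => ENNReal.ofReal ((∫ ω, |X ω| ∂ℙ) / M)) atTop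
        (𝓝 0) := by
      have h3 : Tendsto (fun M : ℝ => (∫ ω, |X ω| ∂ℙ) / M) atTop (𝓝 0) :=
        Tendsto.div_atTop tendsto_const_nhds tendsto_id
      simpa using ENNReal.tendsto_ofReal h3
    refine tendsto_of_tendsto_of_tendsto_of_le_of_le' tendsto_const_nhds h2
      (Filter.Eventually.of_forall fun M => zero_le) ?_
    filter_upwards [eventually_gt_atTop (0:ℝ)] with M hM using hb M hM
  have gtend : Tendsto g atTop (𝓝 0) :=
    hAbs.tendsto_setIntegral_nhds_zero hμtend
  -- m^α n^β → ∞
  have htend : Tendsto (fun mn : ℕ × ℕ => (mn.1 : ℝ) ^ α * (mn.2 : ℝ) ^ β) atTop atTop := by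
    have hm : Tendsto (fun m : ℕ => (m : ℝ) ^ α) atTop atTop :=
      (tendsto_rpow_atTop hα0).comp tendsto_natCast_atTop_atTop
    have hn : Tendsto (fun n : ℕ => (n : ℝ) ^ β) atTop atTop :=
      (tendsto_rpow_atTop hβ0).comp tendsto_natCast_atTop_atTop
    rw [← prod_atTop_atTop_eq]
    exact (hm.comp tendsto_fst).atTop_mul_atTop₀ (hn.comp tendsto_snd)
  -- the dominating function tends to zero
  have hdom : Tendsto (fun mn : ℕ × ℕ =>
      (α * β)⁻¹ * g ((mn.1 : ℝ) ^ α * (mn.2 : ℝ) ^ β)) atTop (𝓝 0) := by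
    have := (gtend.comp htend).const_mul ((α * β)⁻¹)
    simpa using this
  refine squeeze_zero_norm' ?_ hdom
  filter_upwards [eventually_ge_atTop ((1,1) : ℕ × ℕ)] with mn hmn
  obtain ⟨m, n⟩ := mn
  have hm1 : 1 ≤ m := hmn.1
  have hn1 : 1 ≤ n := hmn.2
  dsimp only
  set M : ℝ := (m : ℝ) ^ α * (n : ℝ) ^ β with hM
  have hm0 : (0:ℝ) < (m : ℝ) ^ α :=
    Real.rpow_pos_of_pos (by exact_mod_cast Nat.lt_of_lt_of_le Nat.zero_lt_one hm1) α
  have hn0 : (0:ℝ) < (n : ℝ) ^ β :=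
    Real.rpow_pos_of_pos (by exact_mod_cast Nat.lt_of_lt_of_le Nat.zero_lt_one hn1) β
  have hM0 : 0 < M := mul_pos hm0 hn0
  -- bound on each term
  have term_bound : ∀ k l : ℕ, 1 ≤ k → 1 ≤ l →
      |∫ ω, (if (k : ℝ) ^ (α - 1) * (l : ℝ) ^ (β - 1) * |X ω| ≤ M then
          (k : ℝ) ^ (α - 1) * (l : ℝ) ^ (β - 1) * X ω else 0) ∂ℙ|
        ≤ (k : ℝ) ^ (α - 1) * ((l : ℝ) ^ (β - 1) * g M) := by
    intro k l hk hl
    have hk1 : (1:ℝ) ≤ (k : ℝ) := by exact_mod_cast hk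
    have hl1 : (1:ℝ) ≤ (l : ℝ) := by exact_mod_cast hl
    set c : ℝ := (k : ℝ) ^ (α - 1) * (l : ℝ) ^ (β - 1) with hc
    have hc0 : 0 < c := mul_pos (Real.rpow_pos_of_pos (by linarith) _)
      (Real.rpow_pos_of_pos (by linarith) _)
    have hc1 : c ≤ 1 :=
      mul_le_one₀ (Real.rpow_le_one_of_one_le_of_nonpos hk1 (by linarith))
        (Real.rpow_pos_of_pos (by linarith) _).le
        (Real.rpow_le_one_of_one_le_of_nonpos hl1 (by linarith))
    set s : Set Ω := {ω | c * |X ω| ≤ M} with hs_def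
    have hs : MeasurableSet s := measurableSet_le (hmeas.abs.const_mul c) measurable_const
    have hfi : Integrable (s.indicator fun ω => c * X ω) ℙ := (hint.const_mul c).indicator hs
    have hfi' : Integrable (sᶜ.indicator fun ω => c * X ω) ℙ :=
      (hint.const_mul c).indicator hs.compl
    have hsplit : ∫ ω, s.indicator (fun ω => c * X ω) ω ∂ℙ
        + ∫ ω, sᶜ.indicator (fun ω => c * X ω) ω ∂ℙ = 0 := by
      rw [← integral_add hfi hfi']
      have hpt : ∀ ω, s.indicator (fun ω => c * X ω) ω
          + sᶜ.indicator (fun ω => c * X ω) ω = c * X ω := by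
        intro ω
        by_cases h : ω ∈ s <;> simp [Set.indicator_apply, h]
      simp_rw [hpt]
      rw [integral_const_mul, hmean, mul_zero]
    have heq : (fun ω => if c * |X ω| ≤ M then c * X ω else 0)
        = s.indicator (fun ω => c * X ω) := by
      funext ω
      simp [Set.indicator_apply, hs_def, Set.mem_setOf_eq]
    have hgoal : |∫ ω, s.indicator (fun ω => c * X ω) ω ∂ℙ| ≤ c * g M := by
      have h1 : ∫ ω, s.indicator (fun ω => c * X ω) ω ∂ℙ
          = - ∫ ω, sᶜ.indicator (fun ω => c * X ω) ω ∂ℙ := by linarith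
      rw [h1, abs_neg]
      have hbound_int : Integrable
          (Set.indicator {ω | M < |X ω|} fun ω => c * |X ω|) ℙ :=
        (hAbs.const_mul c).indicator (hmeasset M)
      have hpt2 : ∀ ω, |sᶜ.indicator (fun ω => c * X ω) ω|
          ≤ Set.indicator {ω | M < |X ω|} (fun ω => c * |X ω|) ω := by
        intro ω
        by_cases h : ω ∈ s
        · have h0 : sᶜ.indicator (fun ω => c * X ω) ω = 0 :=
            Set.indicator_of_notMem (by simpa using h) _
          rw [h0, abs_zero]
          exact Set.indicator_nonneg (fun ω _ => mul_nonneg hc0.le (abs_nonneg _)) ω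
        · have hmem : ω ∈ sᶜ := h
          rw [Set.indicator_of_mem hmem, abs_mul, abs_of_pos hc0]
          have hx : ¬ c * |X ω| ≤ M := h
          push_neg at hx
          have hle : c * |X ω| ≤ |X ω| := by nlinarith [abs_nonneg (X ω)]
          have hMlt : M < |X ω| := lt_of_lt_of_le hx hle
          have hmem2 : ω ∈ {ω : Ω | M < |X ω|} := hMlt
          exact le_of_eq (Set.indicator_of_mem hmem2 (fun ω : Ω => c * |X ω|)).symm
      calc |∫ ω, sᶜ.indicator (fun ω => c * X ω) ω ∂ℙ|
          ≤ ∫ ω, |sᶜ.indicator (fun ω => c * X ω) ω| ∂ℙ := by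
            simpa [Real.norm_eq_abs] using
              norm_integral_le_integral_norm (μ := ℙ) (fun ω => sᶜ.indicator (fun ω => c * X ω) ω)
        _ ≤ ∫ ω, Set.indicator {ω | M < |X ω|} (fun ω => c * |X ω|) ω ∂ℙ :=
            integral_mono hfi'.abs hbound_int hpt2
        _ = c * g M := by
            rw [integral_indicator (hmeasset M), integral_const_mul]
    calc |∫ ω, (if (k : ℝ) ^ (α - 1) * (l : ℝ) ^ (β - 1) * |X ω| ≤ M then
          (k : ℝ) ^ (α - 1) * (l : ℝ) ^ (β - 1) * X ω else 0) ∂ℙ|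
        = |∫ ω, s.indicator (fun ω => c * X ω) ω ∂ℙ| := by rw [← heq]
      _ ≤ c * g M := hgoal
      _ = (k : ℝ) ^ (α - 1) * ((l : ℝ) ^ (β - 1) * g M) := by rw [hc, mul_assoc]
  -- summing the bounds
  have hsum : |∑ k ∈ Finset.Icc 1 m, ∑ l ∈ Finset.Icc 1 n,
      ∫ ω, (if (k : ℝ) ^ (α - 1) * (l : ℝ) ^ (β - 1) * |X ω| ≤ M then
        (k : ℝ) ^ (α - 1) * (l : ℝ) ^ (β - 1) * X ω else 0) ∂ℙ|
      ≤ (∑ k ∈ Finset.Icc 1 m, (k : ℝ) ^ (α - 1)) *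
        ((∑ l ∈ Finset.Icc 1 n, (l : ℝ) ^ (β - 1)) * g M) := by
    have h1 : |∑ k ∈ Finset.Icc 1 m, ∑ l ∈ Finset.Icc 1 n,
        ∫ ω, (if (k : ℝ) ^ (α - 1) * (l : ℝ) ^ (β - 1) * |X ω| ≤ M then
          (k : ℝ) ^ (α - 1) * (l : ℝ) ^ (β - 1) * X ω else 0) ∂ℙ|
        ≤ ∑ k ∈ Finset.Icc 1 m, ∑ l ∈ Finset.Icc 1 n,
          (k : ℝ) ^ (α - 1) * ((l : ℝ) ^ (β - 1) * g M) := by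
      refine (Finset.abs_sum_le_sum_abs _ _).trans (Finset.sum_le_sum fun k hk => ?_)
      refine (Finset.abs_sum_le_sum_abs _ _).trans (Finset.sum_le_sum fun l hl => ?_)
      exact term_bound k l (Finset.mem_Icc.mp hk).1 (Finset.mem_Icc.mp hl).1
    refine h1.trans (le_of_eq ?_)
    simp_rw [← Finset.mul_sum, ← Finset.sum_mul]
  have sa : ∑ k ∈ Finset.Icc 1 m, (k : ℝ) ^ (α - 1) ≤ (m : ℝ) ^ α / α :=
    sum_rpow_le' hα0 hα1 m
  have sb : ∑ l ∈ Finset.Icc 1 n, (l : ℝ) ^ (β - 1) ≤ (n : ℝ) ^ β / β :=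
    sum_rpow_le' hβ0 hβ1 n
  have sa0 : 0 ≤ ∑ k ∈ Finset.Icc 1 m, (k : ℝ) ^ (α - 1) :=
    Finset.sum_nonneg fun k hk => Real.rpow_nonneg (Nat.cast_nonneg k) _
  have sb0 : 0 ≤ ∑ l ∈ Finset.Icc 1 n, (l : ℝ) ^ (β - 1) :=
    Finset.sum_nonneg fun l hl => Real.rpow_nonneg (Nat.cast_nonneg l) _
  have hfinal : |∑ k ∈ Finset.Icc 1 m, ∑ l ∈ Finset.Icc 1 n,
      ∫ ω, (if (k : ℝ) ^ (α - 1) * (l : ℝ) ^ (β - 1) * |X ω| ≤ M then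
        (k : ℝ) ^ (α - 1) * (l : ℝ) ^ (β - 1) * X ω else 0) ∂ℙ|
      ≤ ((m : ℝ) ^ α / α) * (((n : ℝ) ^ β / β) * g M) := by
    refine hsum.trans ?_
    refine mul_le_mul sa (mul_le_mul sb le_rfl (hgnonneg M)
      (div_nonneg hn0.le hβ0.le)) (mul_nonneg sb0 (hgnonneg M)) (div_nonneg hm0.le hα0.le)
  rw [Real.norm_eq_abs, abs_mul, abs_of_nonneg (inv_nonneg.mpr hM0.le)]
  calc M⁻¹ * |∑ k ∈ Finset.Icc 1 m, ∑ l ∈ Finset.Icc 1 n,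
      ∫ ω, (if (k : ℝ) ^ (α - 1) * (l : ℝ) ^ (β - 1) * |X ω| ≤ M then
        (k : ℝ) ^ (α - 1) * (l : ℝ) ^ (β - 1) * X ω else 0) ∂ℙ|
      ≤ M⁻¹ * (((m : ℝ) ^ α / α) * (((n : ℝ) ^ β / β) * g M)) :=
        mul_le_mul_of_nonneg_left hfinal (inv_nonneg.mpr hM0.le)
    _ = (α * β)⁻¹ * g M := by
        rw [hM]
        field_simp
end
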